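/- arXiv:2506.09000 — 5 statements merged into one kernel-verified Lean document; each statement's English description precedes it below -/
import Mathlib

section
/- Let T_G be the multivariate formal power series in commuting indeterminates (X_v)_{v∈V} over ℤ whose coefficient on the monomial ∏_{v∈V} X_v^{d_v} is the (finite) number of equivalence classes of words having exactly d_v occurrences of each letter v, for every finitely supported function d : V → ℕ. Then (Σ over cliques K of G of (-1)^{|K|} ∏_{v∈K} X_v) · T_G = 1 in the ring of formal power series ℤ[[(X_v)_{v∈V}]]. (Cartier–Foata identity, Eqn. (4.1).) -/
open scoped Classical ENNReal

set_option linter.unusedSectionVars false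

variable {V : Type*} [Fintype V] [DecidableEq V]

def AdjSwap (G : SimpleGraph V) (w w' : List V) : Prop :=
  ∃ (a b : List V) (u v : V), G.Adj u v ∧ w = a ++ u :: v :: b ∧ w' = a ++ v :: u :: b

def WordEquiv (G : SimpleGraph V) : List V → List V → Prop :=
  Relation.ReflTransGen (AdjSwap G)

lemma adjSwap_symm (G : SimpleGraph V) : Symmetric (AdjSwap G) := by
  rintro w w' ⟨a, b, u, v, h, rfl, rfl⟩
  exact ⟨a, b, v, u, h.symm, rfl, rfl⟩

def wordSetoid (G : SimpleGraph V) : Setoid (List V) where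
  r := WordEquiv G
  iseqv := ⟨fun _ => Relation.ReflTransGen.refl,
    fun h => by
      induction h with
      | refl => exact Relation.ReflTransGen.refl
      | tail _ hs ih => exact Relation.ReflTransGen.head (adjSwap_symm G hs) ih,
    fun h h' => Relation.ReflTransGen.trans h h'⟩

/-- The number of occurrences of each letter depends only on the equivalence class. -/
def classOcc (G : SimpleGraph V) (v : V) : Quotient (wordSetoid G) → ℕ :=
  Quotient.lift (fun w : List V => w.count v) (by
    intro a b h
    induction h with
    | refl => rfl
    | tail _ hs ih =>
        obtain ⟨a', b', u, u', huv, rfl, rfl⟩ := hs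
        rw [ih]
        simp only [List.count_append, List.count_cons]
        ring)

set_option maxHeartbeats 1000000

section Words

variable (G : SimpleGraph V)

lemma wordEquiv_refl (w : List V) : WordEquiv G w w := Relation.ReflTransGen.refl

lemma wordEquiv_symm {w w' : List V} (h : WordEquiv G w w') : WordEquiv G w' w :=
  (wordSetoid G).iseqv.symm h

lemma wordEquiv_trans {w w' w'' : List V} (h : WordEquiv G w w') (h' : WordEquiv G w' w'') :
    WordEquiv G w w'' := Relation.ReflTransGen.trans h h'

lemma wordEquiv_cons (x : V) {w w' : List V} (h : WordEquiv G w w') :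
    WordEquiv G (x :: w) (x :: w') := by
  induction h with
  | refl => exact .refl
  | tail _ hs ih =>
      obtain ⟨a, b, u, v, huv, rfl, rfl⟩ := hs
      exact ih.tail ⟨x :: a, b, u, v, huv, rfl, rfl⟩

lemma wordEquiv_count {w w' : List V} (h : WordEquiv G w w') (v : V) :
    w.count v = w'.count v := by
  have : classOcc G v ⟦w⟧ = classOcc G v (Quotient.mk (wordSetoid G) w') := by
    exact congrArg _ (Quotient.sound h)
  simpa [classOcc] using this

/-- The swap of two adjacent letters. -/
lemma wordEquiv_swap {u v : V} (h : G.Adj u v) (b : List V) :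
    WordEquiv G (u :: v :: b) (v :: u :: b) :=
  Relation.ReflTransGen.single ⟨[], b, u, v, h, rfl, rfl⟩

/-- The projection filter to a pair of letters. -/
def pb (u z : V) : V → Bool := fun x => decide (x = u) || decide (x = z)

lemma filter_eq_of_wordEquiv {u z : V} (hne : ¬ G.Adj u z) {w w' : List V}
    (h : WordEquiv G w w') : w.filter (pb u z) = w'.filter (pb u z) := by
  induction h with
  | refl => rfl
  | tail _ hs ih =>
    obtain ⟨a, b, x, y, hxy, rfl, rfl⟩ := hs
    rw [ih]
    simp only [List.filter_append, List.filter_cons]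
    have hor : pb u z x = false ∨ pb u z y = false := by
      by_contra hc
      push_neg at hc
      obtain ⟨hx, hy⟩ := hc
      simp only [Bool.not_eq_false, pb, Bool.or_eq_true, decide_eq_true_eq] at hx hy
      have hne' : x ≠ y := hxy.ne
      rcases hx with rfl | rfl <;> rcases hy with rfl | rfl
      · exact hne' rfl
      · exact hne hxy
      · exact hne hxy.symm
      · exact hne' rfl
    rcases hor with hx | hy
    · simp [hx]
    · simp [hy]

lemma filter_head_of_init {w s : List V} {v : V} (h : WordEquiv G w (v :: s))
    (u : V) (hadj : ¬ G.Adj u v) :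
    ∃ t, w.filter (pb u v) = v :: t := by
  rw [filter_eq_of_wordEquiv G hadj h]
  refine ⟨s.filter (pb u v), ?_⟩
  rw [List.filter_cons_of_pos]
  simp [pb]

lemma init_of_filter (v : V) : ∀ (w : List V), v ∈ w →
    (∀ u, u ≠ v → ¬ G.Adj u v → ∃ t, w.filter (pb u v) = v :: t) →
    ∃ s, WordEquiv G w (v :: s) := by
  intro w
  induction w with
  | nil => simp
  | cons a w₁ ih =>
    intro hv h
    by_cases hav : a = v
    · subst hav; exact ⟨w₁, wordEquiv_refl G _⟩
    · have hadj : G.Adj a v := by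
        by_contra hadj
        obtain ⟨t, ht⟩ := h a hav hadj
        rw [List.filter_cons_of_pos (by simp [pb])] at ht
        exact hav (List.cons.injEq .. ▸ ht |>.1)
      have hvmem : v ∈ w₁ := by
        rcases List.mem_cons.mp hv with h' | h'
        · exact absurd h'.symm hav
        · exact h'
      obtain ⟨s, hs⟩ := ih hvmem (by
        intro u hu hadju
        have hau : a ≠ u := by rintro rfl; exact hadju hadj
        obtain ⟨t, ht⟩ := h u hu hadju
        rw [List.filter_cons_of_neg (by simp [pb, hau, hav])] at ht
        exact ⟨t, ht⟩)
      exact ⟨a :: s, wordEquiv_trans G (wordEquiv_cons G a hs)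
        (wordEquiv_swap G hadj s)⟩

lemma wordEquiv_of_filter : ∀ (w w' : List V),
    (∀ u z, ¬ G.Adj u z → w.filter (pb u z) = w'.filter (pb u z)) →
    WordEquiv G w w' := by
  intro w
  induction w with
  | nil =>
    intro w' h
    have : w' = [] := by
      rw [List.eq_nil_iff_forall_not_mem]
      intro a ha
      have := h a a (G.irrefl)
      simp only [List.filter_nil] at this
      have : a ∈ w'.filter (pb a a) := List.mem_filter.mpr ⟨ha, by simp [pb]⟩
      rw [← h a a (G.irrefl)] at this
      simp at this
    rw [this]
    exact wordEquiv_refl G []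
  | cons a w₁ ih =>
    intro w' h
    have hmem : a ∈ w' := by
      have := h a a (G.irrefl)
      rw [List.filter_cons_of_pos (by simp [pb])] at this
      have : a ∈ w'.filter (pb a a) := this ▸ List.mem_cons_self
      exact (List.mem_filter.mp this).1
    obtain ⟨w₂, hw₂⟩ := init_of_filter G a w' hmem (by
      intro u hu hadj
      have := h u a (fun hc => hadj hc)
      rw [List.filter_cons_of_pos (by simp [pb])] at this
      exact ⟨w₁.filter (pb u a), this.symm⟩)
    have hfil : ∀ u z, ¬ G.Adj u z → w₁.filter (pb u z) = w₂.filter (pb u z) := by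
      intro u z hadj
      have h1 := h u z hadj
      have h2 := filter_eq_of_wordEquiv G hadj hw₂
      rw [h2] at h1
      by_cases hpa : pb u z a = true
      · rw [List.filter_cons_of_pos hpa, List.filter_cons_of_pos hpa] at h1
        exact List.cons.injEq .. ▸ h1 |>.2
      · rw [List.filter_cons_of_neg (by simpa using hpa)] at h1
        rw [h1]
        rw [List.filter_cons_of_neg (by simpa using hpa)]
    exact wordEquiv_trans G (wordEquiv_cons G a (ih w₂ hfil)) (wordEquiv_symm G hw₂)

lemma wordEquiv_cons_cancel {x : V} {w w' : List V}
    (h : WordEquiv G (x :: w) (x :: w')) : WordEquiv G w w' := by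
  apply wordEquiv_of_filter
  intro u z hadj
  have h1 := filter_eq_of_wordEquiv G hadj h
  by_cases hpx : pb u z x = true
  · rw [List.filter_cons_of_pos hpx, List.filter_cons_of_pos hpx] at h1
    exact List.cons.injEq .. ▸ h1 |>.2
  · rwa [List.filter_cons_of_neg (by simpa using hpx),
      List.filter_cons_of_neg (by simpa using hpx)] at h1

end Words

section Classes

variable (G : SimpleGraph V)

/-- Cons a letter onto an equivalence class. -/
def consC (v : V) : Quotient (wordSetoid G) → Quotient (wordSetoid G) :=
  Quotient.map (v :: ·) (fun _ _ h => wordEquiv_cons G v h)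

@[simp] lemma consC_mk (v : V) (w : List V) :
    consC G v (Quotient.mk (wordSetoid G) w) = Quotient.mk (wordSetoid G) (v :: w) := rfl

lemma consC_injective (v : V) : Function.Injective (consC G v) := by
  intro c c' h
  induction c using Quotient.ind
  induction c' using Quotient.ind
  simp only [consC_mk] at h
  exact Quotient.sound (wordEquiv_cons_cancel G (Quotient.exact h))

lemma classOcc_consC (u v : V) (c : Quotient (wordSetoid G)) :
    classOcc G u (consC G v c) = classOcc G u c + (if v = u then 1 else 0) := by
  induction c using Quotient.ind with | _ w =>
  simp [classOcc, List.count_cons]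

/-- `v` is an initial letter of the class `c`. -/
def InitC (c : Quotient (wordSetoid G)) (v : V) : Prop :=
  ∃ c', c = consC G v c'

lemma initC_mk_iff (w : List V) (v : V) :
    InitC G (Quotient.mk (wordSetoid G) w) v ↔ ∃ s, WordEquiv G w (v :: s) := by
  constructor
  · rintro ⟨c', hc⟩
    induction c' using Quotient.ind with | _ s =>
    exact ⟨s, Quotient.exact hc⟩
  · rintro ⟨s, hs⟩
    exact ⟨Quotient.mk (wordSetoid G) s, Quotient.sound hs⟩

lemma initC_cons_self (v : V) (c : Quotient (wordSetoid G)) : InitC G (consC G v c) v := ⟨c, rfl⟩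

lemma initC_adj {c : Quotient (wordSetoid G)} {u v : V} (hu : InitC G c u) (hv : InitC G c v)
    (hne : u ≠ v) : G.Adj u v := by
  induction c using Quotient.ind with | _ w =>
  rw [initC_mk_iff] at hu hv
  obtain ⟨s, hs⟩ := hu
  obtain ⟨t, ht⟩ := hv
  by_contra hadj
  obtain ⟨t1, ht1⟩ := filter_head_of_init G hs v (fun hc => hadj hc.symm)
  obtain ⟨t2, ht2⟩ := filter_head_of_init G ht u hadj
  -- ht1 : filter (pb v u) w = u :: t1,  ht2 : filter (pb u v) w = v :: t2
  have hpp : pb v u = pb u v := by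
    funext x; simp [pb, Bool.or_comm]
  rw [hpp, ht2] at ht1
  exact hne (List.cons.injEq .. ▸ ht1 |>.1).symm

lemma initC_cons {c : Quotient (wordSetoid G)} {u v : V}
    (h : InitC G (consC G v c) u) (hne : u ≠ v) : G.Adj u v ∧ InitC G c u := by
  induction c using Quotient.ind with | _ w =>
  have hadj : G.Adj u v := initC_adj G h (initC_cons_self G v _) hne
  refine ⟨hadj, ?_⟩
  rw [consC_mk, initC_mk_iff] at h
  obtain ⟨t, ht⟩ := h
  rw [initC_mk_iff]
  -- count u in w positive
  have hmemw : u ∈ w := by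
    have h1 : 0 < (v :: w).count u := by
      rw [wordEquiv_count G ht u]; exact List.count_pos_iff.mpr List.mem_cons_self
    exact (List.mem_cons.mp (List.count_pos_iff.mp h1)).resolve_left hne
  apply init_of_filter G u w hmemw
  intro z hz hadjz
  have hzv : z ≠ v := by rintro rfl; exact hadjz hadj.symm
  obtain ⟨t2, ht2⟩ := filter_head_of_init G ht z hadjz
  rw [List.filter_cons_of_neg (by simp [pb, Ne.symm hzv, Ne.symm hne])] at ht2
  exact ⟨t2, ht2⟩

lemma initC_cons_of {c : Quotient (wordSetoid G)} {u v : V}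
    (hadj : G.Adj u v) (h : InitC G c u) : InitC G (consC G v c) u := by
  induction c using Quotient.ind with | _ w =>
  rw [initC_mk_iff] at h
  obtain ⟨s, hs⟩ := h
  rw [consC_mk, initC_mk_iff]
  exact ⟨v :: s, wordEquiv_trans G (wordEquiv_cons G v hs) (wordEquiv_swap G hadj.symm s)⟩

lemma classOcc_eq_zero_iff (c : Quotient (wordSetoid G)) :
    (∀ v, classOcc G v c = 0) ↔ c = Quotient.mk (wordSetoid G) [] := by
  induction c using Quotient.ind with | _ w =>
  constructor
  · intro h
    have : w = [] := by
      rw [List.eq_nil_iff_forall_not_mem]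
      intro a ha
      have := h a
      simp only [classOcc, Quotient.lift_mk] at this
      exact absurd this (by simpa [List.count_pos_iff] using List.count_pos_iff.mpr ha |>.ne')
    rw [this]
  · intro h
    intro v
    have := h ▸ (rfl : classOcc G v (Quotient.mk (wordSetoid G) w) = _)
    simp only [classOcc, Quotient.lift_mk] at this ⊢
    rw [show w.count v = ([] : List V).count v from by
      have := Quotient.exact h
      exact wordEquiv_count G this v]
    simp

lemma exists_initC_of_ne_nil {c : Quotient (wordSetoid G)} {v : V}
    (h : classOcc G v c ≠ 0) : ∃ u c', c = consC G u c' := by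
  induction c using Quotient.ind with | _ w =>
  match w with
  | [] => simp [classOcc] at h
  | a :: w' => exact ⟨a, Quotient.mk (wordSetoid G) w', rfl⟩

end Classes

section Ind

lemma length_eq_sum_count (w : List V) : w.length = ∑ v, w.count v := by
  induction w with
  | nil => simp
  | cons a w ih =>
    simp only [List.length_cons, List.count_cons, ih, Finset.sum_add_distrib]
    simp [Finset.sum_ite_eq']

noncomputable def indF (K : Finset V) : V →₀ ℕ := ∑ v ∈ K, Finsupp.single v 1

lemma indF_apply (K : Finset V) (v : V) : indF K v = if v ∈ K then 1 else 0 := by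
  classical
  rw [indF, Finset.sum_apply']
  simp only [Finsupp.single_apply]
  rw [Finset.sum_ite_eq' K v (fun _ => 1)]

variable (G : SimpleGraph V)

lemma finite_le (d : V →₀ ℕ) :
    Finite {c : Quotient (wordSetoid G) // ∀ v, classOcc G v c ≤ d v} := by
  classical
  set n := ∑ v, d v with hn
  have hfin : {w : List V | w.length ≤ n}.Finite := List.finite_length_le V n
  have hsub : {c : Quotient (wordSetoid G) | ∀ v, classOcc G v c ≤ d v} ⊆
      (Quotient.mk (wordSetoid G)) '' {w : List V | w.length ≤ n} := by
    intro c hc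
    induction c using Quotient.ind with | _ w =>
    refine ⟨w, ?_, rfl⟩
    have : w.length = ∑ v, w.count v := length_eq_sum_count w
    have hle : ∀ v, w.count v ≤ d v := fun v => hc v
    calc w.length = ∑ v, w.count v := this
      _ ≤ ∑ v, d v := Finset.sum_le_sum (fun v _ => hle v)
  exact ((hfin.image _).subset hsub).to_subtype

abbrev CFPairs (d : V →₀ ℕ) :=
  {p : Finset V × Quotient (wordSetoid G) //
    G.IsClique (p.1 : Set V) ∧ ∀ v, indF p.1 v + classOcc G v p.2 = d v}

instance cfPairsFinite (d : V →₀ ℕ) : Finite (CFPairs G d) := by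
  have := finite_le G d
  apply Finite.of_injective
    (fun p : CFPairs G d =>
      ((p.1.1, ⟨p.1.2, fun v => by have := p.2.2 v; omega⟩) :
        Finset V × {c : Quotient (wordSetoid G) // ∀ v, classOcc G v c ≤ d v}))
  intro p q h
  simp only [Prod.mk.injEq, Subtype.mk.injEq] at h
  exact Subtype.ext (Prod.ext h.1 h.2)

instance cfMFinite (K : Finset V) (d : V →₀ ℕ) :
    Finite {c : Quotient (wordSetoid G) // ∀ v, indF K v + classOcc G v c = d v} := by
  have := finite_le G d
  apply Finite.of_injective
    (fun c : {c : Quotient (wordSetoid G) // ∀ v, indF K v + classOcc G v c = d v} =>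
      (⟨c.1, fun v => by have := c.2 v; omega⟩ :
        {c : Quotient (wordSetoid G) // ∀ v, classOcc G v c ≤ d v}))
  intro p q h
  simp only [Subtype.mk.injEq] at h
  exact Subtype.ext h

end Ind

section Invol

variable (G : SimpleGraph V) [LinearOrder V]

/-- The set of "active" vertices of a pair: vertices in the clique, together with initial
letters of the word that can be added to the clique. -/
noncomputable def Tset {d : V →₀ ℕ} (p : CFPairs G d) : Finset V :=
  p.1.1 ∪ Finset.univ.filter
    (fun v => InitC G p.1.2 v ∧ G.IsClique ((insert v p.1.1 : Finset V) : Set V))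

lemma mem_Tset {d : V →₀ ℕ} (p : CFPairs G d) (v : V) :
    v ∈ Tset G p ↔ v ∈ p.1.1 ∨
      (InitC G p.1.2 v ∧ G.IsClique ((insert v p.1.1 : Finset V) : Set V)) := by
  simp [Tset]

lemma Tset_nonempty {d : V →₀ ℕ} (hd : d ≠ 0) (p : CFPairs G d) : (Tset G p).Nonempty := by
  rcases Finset.eq_empty_or_nonempty p.1.1 with hK | hK
  · have : ∃ v, d v ≠ 0 := by
      by_contra h
      push_neg at h
      exact hd (Finsupp.ext h)
    obtain ⟨v, hv⟩ := this
    have hocc : classOcc G v p.1.2 ≠ 0 := by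
      have := p.2.2 v
      rw [hK, indF_apply] at this
      simp only [Finset.notMem_empty, if_false] at this
      omega
    obtain ⟨u, c', hc⟩ := exists_initC_of_ne_nil G hocc
    refine ⟨u, ?_⟩
    rw [mem_Tset]
    right
    refine ⟨⟨c', hc⟩, ?_⟩
    rw [hK]
    have : ((insert u (∅ : Finset V) : Finset V) : Set V) = {u} := by simp
    rw [this]
    exact G.isClique_singleton u
  · obtain ⟨v, hv⟩ := hK
    exact ⟨v, by rw [mem_Tset]; exact Or.inl hv⟩

end Invol

section Invol2

variable (G : SimpleGraph V) [LinearOrder V]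

noncomputable def cfInvol {d : V →₀ ℕ} (hd : d ≠ 0) (p : CFPairs G d) : CFPairs G d :=
  if hv : (Tset G p).min' (Tset_nonempty G hd p) ∈ p.1.1 then
    ⟨(p.1.1.erase ((Tset G p).min' (Tset_nonempty G hd p)),
      consC G ((Tset G p).min' (Tset_nonempty G hd p)) p.1.2), by
      constructor
      · refine p.2.1.subset ?_
        rw [Finset.coe_erase]
        exact Set.diff_subset
      · intro u
        have h0 := p.2.2 u
        rw [indF_apply] at h0
        rw [indF_apply, classOcc_consC]
        set v0 := (Tset G p).min' (Tset_nonempty G hd p)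
        by_cases huv : v0 = u
        · subst huv
          rw [if_pos hv] at h0
          rw [if_pos rfl, if_neg (by simp [Finset.mem_erase])]
          omega
        · simp only [Finset.mem_erase, ne_eq, Ne.symm huv, not_false_eq_true, true_and,
            if_neg huv] at h0 ⊢
          omega⟩
  else
    ⟨(insert ((Tset G p).min' (Tset_nonempty G hd p)) p.1.1,
      Classical.choose (((mem_Tset G p _).mp
        ((Tset G p).min'_mem (Tset_nonempty G hd p))).resolve_left hv).1), by
      have hvi := ((mem_Tset G p _).mp
        ((Tset G p).min'_mem (Tset_nonempty G hd p))).resolve_left hv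
      have hc := Classical.choose_spec hvi.1
      constructor
      · exact hvi.2
      · intro u
        dsimp only
        have h0 := p.2.2 u
        rw [indF_apply, hc, classOcc_consC] at h0
        rw [indF_apply]
        set v0 := (Tset G p).min' (Tset_nonempty G hd p)
        by_cases huv : v0 = u
        · subst huv
          rw [if_neg hv, if_pos rfl] at h0
          rw [if_pos (Finset.mem_insert_self _ _)]
          omega
        · simp only [Finset.mem_insert, Ne.symm huv, false_or, if_neg huv] at h0 ⊢
          have huv' : ¬ (Tset G p).min' (Tset_nonempty G hd p) = u := huv
          simp only [huv', Ne.symm huv', false_or, if_false] at h0 ⊢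
          omega⟩

end Invol2

section Invol3

variable (G : SimpleGraph V) [LinearOrder V] {d : V →₀ ℕ}

lemma cfInvol_of_mem (hd : d ≠ 0) (p : CFPairs G d)
    (hv : (Tset G p).min' (Tset_nonempty G hd p) ∈ p.1.1) :
    (cfInvol G hd p).1 = (p.1.1.erase ((Tset G p).min' (Tset_nonempty G hd p)),
      consC G ((Tset G p).min' (Tset_nonempty G hd p)) p.1.2) := by
  rw [cfInvol, dif_pos hv]

lemma cfInvol_of_not_mem (hd : d ≠ 0) (p : CFPairs G d)
    (hv : ¬ (Tset G p).min' (Tset_nonempty G hd p) ∈ p.1.1) :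
    (cfInvol G hd p).1.1 = insert ((Tset G p).min' (Tset_nonempty G hd p)) p.1.1 ∧
    consC G ((Tset G p).min' (Tset_nonempty G hd p)) (cfInvol G hd p).1.2 = p.1.2 := by
  rw [cfInvol, dif_neg hv]
  exact ⟨rfl, (Classical.choose_spec (((mem_Tset G p _).mp
    ((Tset G p).min'_mem (Tset_nonempty G hd p))).resolve_left hv).1).symm⟩

lemma Tset_min_eq (p : CFPairs G d) (v0 : V) (hne : (Tset G p).Nonempty)
    (hmem : v0 ∈ Tset G p) (hle : ∀ u ∈ Tset G p, v0 ≤ u) :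
    (Tset G p).min' hne = v0 :=
  le_antisymm (Finset.min'_le _ _ hmem) (Finset.le_min' _ _ _ (fun u hu => hle u hu))

lemma card_cfInvol (hd : d ≠ 0) (p : CFPairs G d) :
    ((-1 : ℤ) ^ (cfInvol G hd p).1.1.card) + (-1 : ℤ) ^ p.1.1.card = 0 := by
  by_cases hv : (Tset G p).min' (Tset_nonempty G hd p) ∈ p.1.1
  · have h1 := cfInvol_of_mem G hd p hv
    have : (cfInvol G hd p).1.1 = p.1.1.erase ((Tset G p).min' (Tset_nonempty G hd p)) := by
      rw [h1]
    rw [this, Finset.card_erase_of_mem hv]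
    have hpos : 0 < p.1.1.card := Finset.card_pos.mpr ⟨_, hv⟩
    obtain ⟨k, hk⟩ := Nat.exists_eq_add_of_lt hpos
    rw [hk]
    simp [pow_succ]
  · have h1 := (cfInvol_of_not_mem G hd p hv).1
    rw [h1, Finset.card_insert_of_notMem hv]
    simp [pow_succ]

lemma cfInvol_ne (hd : d ≠ 0) (p : CFPairs G d) : cfInvol G hd p ≠ p := by
  intro h
  have h1 : (cfInvol G hd p).1.1 = p.1.1 := congrArg (fun q : CFPairs G d => q.1.1) h
  by_cases hv : (Tset G p).min' (Tset_nonempty G hd p) ∈ p.1.1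
  · have h2 : (cfInvol G hd p).1.1
        = p.1.1.erase ((Tset G p).min' (Tset_nonempty G hd p)) :=
      congrArg Prod.fst (cfInvol_of_mem G hd p hv)
    rw [h2] at h1
    have : (Tset G p).min' (Tset_nonempty G hd p) ∈ p.1.1.erase _ := h1.symm ▸ hv
    simp [Finset.mem_erase] at this
  · have h2 := (cfInvol_of_not_mem G hd p hv).1
    rw [h2] at h1
    exact hv (h1 ▸ Finset.mem_insert_self _ _)

end Invol3

section Invol4

variable (G : SimpleGraph V) [LinearOrder V] {d : V →₀ ℕ}

lemma cfInvol_invol (hd : d ≠ 0) (p : CFPairs G d) :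
    cfInvol G hd (cfInvol G hd p) = p := by
  set v0 := (Tset G p).min' (Tset_nonempty G hd p) with hv0
  set p' := cfInvol G hd p with hp'
  by_cases hv : v0 ∈ p.1.1
  · have h1 : p'.1 = (p.1.1.erase v0, consC G v0 p.1.2) := cfInvol_of_mem G hd p hv
    have hK' : p'.1.1 = p.1.1.erase v0 := congrArg Prod.fst h1
    have hc' : p'.1.2 = consC G v0 p.1.2 := congrArg Prod.snd h1
    have hKeq : insert v0 (p.1.1.erase v0) = p.1.1 := Finset.insert_erase hv
    -- Step A : the minimum of Tset p' is v0
    have hmin : (Tset G p').min' (Tset_nonempty G hd p') = v0 := by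
      apply Tset_min_eq
      · rw [mem_Tset]
        right
        constructor
        · rw [hc']; exact initC_cons_self G v0 p.1.2
        · rw [hK', hKeq]; exact p.2.1
      · intro u hu
        rw [mem_Tset] at hu
        rcases hu with hu | ⟨hInit, hcl⟩
        · rw [hK'] at hu
          exact Finset.min'_le _ _ ((mem_Tset G p u).mpr (Or.inl (Finset.mem_of_mem_erase hu)))
        · by_cases huv : u = v0
          · exact le_of_eq huv.symm
          · rw [hc'] at hInit
            obtain ⟨hadj, hInitc⟩ := initC_cons G hInit huv
            rw [hK'] at hcl
            apply Finset.min'_le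
            rw [mem_Tset]
            right
            refine ⟨hInitc, ?_⟩
            have hsub : ((insert u p.1.1 : Finset V) : Set V) ⊆
                insert v0 ((insert u (p.1.1.erase v0) : Finset V) : Set V) := by
              intro x hx
              simp only [Finset.coe_insert, Set.mem_insert_iff, Finset.mem_coe,
                Finset.mem_erase] at hx ⊢
              rcases hx with rfl | hx
              · right; left; rfl
              · by_cases hxv : x = v0
                · left; exact hxv
                · right; right; exact ⟨hxv, hx⟩
            refine SimpleGraph.IsClique.subset hsub (SimpleGraph.IsClique.insert hcl ?_)
            intro b hb hbne
            simp only [Finset.coe_insert, Set.mem_insert_iff, Finset.mem_coe,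
              Finset.mem_erase] at hb
            rcases hb with rfl | hb
            · exact hadj.symm
            · exact p.2.1 hv hb.2 (Ne.symm hb.1)
    -- Step B
    have hv' : ¬ (Tset G p').min' (Tset_nonempty G hd p') ∈ p'.1.1 := by
      rw [hmin, hK']
      simp [Finset.mem_erase]
    obtain ⟨hins, hcons⟩ := cfInvol_of_not_mem G hd p' hv'
    rw [hmin] at hins hcons
    apply Subtype.ext
    apply Prod.ext
    · rw [hins, hK', hKeq]
    · apply consC_injective G v0
      rw [hcons, hc']
  · obtain ⟨hK', hcc⟩ := cfInvol_of_not_mem G hd p hv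
    have hmin : (Tset G p').min' (Tset_nonempty G hd p') = v0 := by
      apply Tset_min_eq
      · rw [mem_Tset, hK']
        exact Or.inl (Finset.mem_insert_self _ _)
      · intro u hu
        rw [mem_Tset] at hu
        rcases hu with hu | ⟨hInit, hcl⟩
        · rw [hK', Finset.mem_insert] at hu
          rcases hu with rfl | hu
          · exact le_refl _
          · exact Finset.min'_le _ _ ((mem_Tset G p u).mpr (Or.inl hu))
        · by_cases huv : u = v0
          · exact le_of_eq huv.symm
          · rw [hK'] at hcl
            have hadj : G.Adj u v0 := hcl (by simp) (by simp [hv0]) huv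
            have hInitc : InitC G p.1.2 u := by
              rw [← hcc]
              exact initC_cons_of G hadj hInit
            apply Finset.min'_le
            rw [mem_Tset]
            right
            refine ⟨hInitc, ?_⟩
            refine SimpleGraph.IsClique.subset ?_ hcl
            intro x hx
            simp only [Finset.coe_insert, Set.mem_insert_iff, Finset.mem_coe] at hx ⊢
            tauto
    have hv2 : (Tset G p').min' (Tset_nonempty G hd p') ∈ p'.1.1 := by
      rw [hmin, hK']
      exact Finset.mem_insert_self _ _
    have h2 := cfInvol_of_mem G hd p' hv2
    rw [hmin] at h2
    apply Subtype.ext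
    rw [h2]
    apply Prod.ext
    · simp only
      rw [hK', Finset.erase_insert hv]
    · simp only
      rw [hcc]

end Invol4

section Key

variable (G : SimpleGraph V) [LinearOrder V]

lemma cf_key (d : V →₀ ℕ) :
    ∑ K ∈ Finset.univ.powerset.filter (fun K : Finset V => G.IsClique (K : Set V)),
      ((-1 : ℤ) ^ K.card *
        (Nat.card {c : Quotient (wordSetoid G) // ∀ v, indF K v + classOcc G v c = d v} : ℤ))
    = if d = 0 then 1 else 0 := by
  classical
  letI : Fintype (CFPairs G d) := Fintype.ofFinite _
  have hstep : ∑ K ∈ Finset.univ.powerset.filter (fun K : Finset V => G.IsClique (K : Set V)),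
      ((-1 : ℤ) ^ K.card *
        (Nat.card {c : Quotient (wordSetoid G) // ∀ v, indF K v + classOcc G v c = d v} : ℤ))
      = ∑ p : CFPairs G d, (-1 : ℤ) ^ p.1.1.card := by
    rw [← Finset.sum_fiberwise_of_maps_to
      (g := fun p : CFPairs G d => p.1.1)
      (t := Finset.univ.powerset.filter (fun K : Finset V => G.IsClique (K : Set V)))
      (fun p _ => by
        simp only [Finset.mem_filter, Finset.mem_powerset]
        exact ⟨Finset.subset_univ _, p.2.1⟩)
      (fun p : CFPairs G d => (-1 : ℤ) ^ p.1.1.card)]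
    apply Finset.sum_congr rfl
    intro K hK
    simp only [Finset.mem_filter, Finset.mem_powerset] at hK
    have hconst : ∀ p ∈ Finset.univ.filter (fun p : CFPairs G d => p.1.1 = K),
        (-1 : ℤ) ^ p.1.1.card = (-1 : ℤ) ^ K.card := by
      intro p hp
      simp only [Finset.mem_filter] at hp
      rw [hp.2]
    rw [Finset.sum_congr rfl hconst, Finset.sum_const]
    letI : Fintype {c : Quotient (wordSetoid G) // ∀ v, indF K v + classOcc G v c = d v} :=
      Fintype.ofFinite _
    have hcard : (Finset.univ.filter (fun p : CFPairs G d => p.1.1 = K)).card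
        = Nat.card {c : Quotient (wordSetoid G) // ∀ v, indF K v + classOcc G v c = d v} := by
      rw [Nat.card_eq_fintype_card, ← Finset.card_univ]
      have hcond : ∀ p : CFPairs G d, p.1.1 = K → ∀ v, indF K v + classOcc G v p.1.2 = d v := by
        intro p hp v
        have := p.2.2 v
        rwa [hp] at this
      apply Finset.card_bij'
        (i := fun (p : CFPairs G d) (hp : p ∈ Finset.univ.filter (fun p : CFPairs G d => p.1.1 = K)) =>
          (⟨p.1.2, hcond p (Finset.mem_filter.mp hp).2⟩ :
            {c : Quotient (wordSetoid G) // ∀ v, indF K v + classOcc G v c = d v}))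
        (j := fun c _ => (⟨(K, c.1), hK.2, c.2⟩ : CFPairs G d))
      case hi => intro a ha; exact Finset.mem_univ _
      case hj =>
        intro c _
        simp only [Finset.mem_filter]
        exact ⟨Finset.mem_univ _, trivial⟩
      case left_inv =>
        intro p hp
        exact Subtype.ext (Prod.ext (Finset.mem_filter.mp hp).2.symm rfl)
      case right_inv => intro c _; rfl
    rw [hcard]
    simp [mul_comm]
  rw [hstep]
  by_cases hd : d = 0
  · subst hd
    have hcl0 : G.IsClique ((∅ : Finset V) : Set V) := by simp
    have hCnd : ∀ v, indF (∅ : Finset V) v + classOcc G v (Quotient.mk (wordSetoid G) [])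
        = (0 : V →₀ ℕ) v := by
      intro v
      rw [indF_apply]
      simp [classOcc]
    have hp0 : ∀ p : CFPairs G 0, p = ⟨((∅ : Finset V), Quotient.mk (wordSetoid G) []), hcl0, hCnd⟩ := by
      intro p
      apply Subtype.ext
      have hK : p.1.1 = ∅ := by
        rw [Finset.eq_empty_iff_forall_notMem]
        intro v hv
        have := p.2.2 v
        rw [indF_apply, if_pos hv] at this
        simp at this
      have hc : p.1.2 = Quotient.mk (wordSetoid G) [] := by
        rw [← classOcc_eq_zero_iff]
        intro v
        have := p.2.2 v
        rw [indF_apply] at this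
        simp only [Finsupp.coe_zero, Pi.zero_apply] at this
        omega
      exact Prod.ext hK hc
    haveI : Unique (CFPairs G 0) :=
      ⟨⟨⟨((∅ : Finset V), Quotient.mk (wordSetoid G) []), hcl0, hCnd⟩⟩, hp0⟩
    rw [Fintype.sum_unique]
    have hdef := congrArg (fun p : CFPairs G 0 => p.1.1) (hp0 default)
    simp only at hdef
    rw [hdef]
    simp
  · rw [if_neg hd]
    apply Finset.sum_ninvolution (g := cfInvol G hd)
    · intro p
      rw [add_comm]
      exact card_cfInvol G hd p
    · intro p _
      exact cfInvol_ne G hd p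
    · intro p
      exact Finset.mem_univ _
    · intro p
      exact cfInvol_invol G hd p

end Key

section Series

lemma prod_X_eq (K : Finset V) :
    (∏ v ∈ K, (MvPowerSeries.X v : MvPowerSeries V ℤ))
      = MvPowerSeries.monomial (indF K) 1 := by
  classical
  induction K using Finset.induction_on with
  | empty =>
    rw [Finset.prod_empty]
    have : indF (∅ : Finset V) = 0 := by simp [indF]
    rw [this, MvPowerSeries.monomial_zero_one]
  | insert a s h ih =>
    rw [Finset.prod_insert h, ih, MvPowerSeries.X, MvPowerSeries.monomial_mul_monomial, one_mul]
    congr 1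
    rw [indF, indF, Finset.sum_insert h]

lemma term_eq (K : Finset V) :
    ((-1 : MvPowerSeries V ℤ) ^ K.card * ∏ v ∈ K, MvPowerSeries.X v)
      = MvPowerSeries.monomial (indF K) ((-1 : ℤ) ^ K.card) := by
  rw [prod_X_eq]
  have h1 : ((-1 : MvPowerSeries V ℤ)) = MvPowerSeries.C (σ := V) (-1 : ℤ) := by
    rw [map_neg, map_one]
  rw [h1, ← map_pow, ← MvPowerSeries.monomial_zero_eq_C_apply,
    MvPowerSeries.monomial_mul_monomial, zero_add, mul_one]

/-- The Cartier–Foata generating series: the coefficient on `∏ X_v ^ d_v` is the number of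
equivalence classes of words having exactly `d v` occurrences of each letter `v`. -/
noncomputable def cartierFoataSeries (G : SimpleGraph V) : MvPowerSeries V ℤ :=
  fun d : V →₀ ℕ =>
    (Nat.card {c : Quotient (wordSetoid G) // ∀ v, classOcc G v c = d v} : ℤ)

theorem cartier_foata (G : SimpleGraph V) :
    (∑ K ∈ Finset.univ.powerset.filter (fun K : Finset V => G.IsClique (K : Set V)),
        ((-1 : MvPowerSeries V ℤ) ^ K.card * ∏ v ∈ K, MvPowerSeries.X v))
      * cartierFoataSeries G = 1 := by
  letI : LinearOrder V := LinearOrder.lift' (Fintype.equivFin V) (Fintype.equivFin V).injective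
  apply MvPowerSeries.ext
  intro d
  rw [MvPowerSeries.coeff_one, Finset.sum_mul, map_sum]
  have hterm : ∀ K ∈ Finset.univ.powerset.filter (fun K : Finset V => G.IsClique (K : Set V)),
      (MvPowerSeries.coeff d)
          (((-1 : MvPowerSeries V ℤ) ^ K.card * ∏ v ∈ K, MvPowerSeries.X v)
            * cartierFoataSeries G)
        = (-1 : ℤ) ^ K.card *
            (Nat.card {c : Quotient (wordSetoid G) //
              ∀ v, indF K v + classOcc G v c = d v} : ℤ) := by
    intro K _
    rw [term_eq, MvPowerSeries.coeff_monomial_mul]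
    by_cases hle : indF K ≤ d
    · rw [if_pos hle]
      congr 1
      have hco : (MvPowerSeries.coeff (d - indF K)) (cartierFoataSeries G)
          = (Nat.card {c : Quotient (wordSetoid G) //
              ∀ v, classOcc G v c = (d - indF K) v} : ℤ) := rfl
      rw [hco]
      norm_cast
      apply Nat.card_congr
      apply Equiv.subtypeEquivRight
      intro c
      constructor
      · intro h v
        have h1 := h v
        have h2 : indF K v ≤ d v := Finsupp.le_def.mp hle v
        rw [Finsupp.tsub_apply] at h1
        omega
      · intro h v
        have h1 := h v
        have h2 : indF K v ≤ d v := Finsupp.le_def.mp hle v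
        rw [Finsupp.tsub_apply]
        omega
    · rw [if_neg hle]
      have hemp : IsEmpty {c : Quotient (wordSetoid G) //
          ∀ v, indF K v + classOcc G v c = d v} := by
        constructor
        rintro ⟨c, hc⟩
        rw [Finsupp.le_def] at hle
        push_neg at hle
        obtain ⟨v, hv⟩ := hle
        have := hc v
        omega
      rw [Nat.card_of_isEmpty]
      simp
  rw [Finset.sum_congr rfl hterm, cf_key]
end Series
end

section
/- For every u ∈ [0,∞)^V with Euclidean norm ‖u‖ = 1, the set {r ∈ [0,∞) : 𝕶_G(r·u) = 0} is nonempty, it has a minimum, and this minimum equals ρ(u). (Lemma 4.3(1).) -/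
open scoped Classical ENNReal

set_option linter.unusedSectionVars false

variable {V : Type*} [Fintype V] [DecidableEq V]

/-- A word is `G`-reduced if between any two equal letters there is a letter distinct from
them and not adjacent to them. -/
def IsGReduced (G : SimpleGraph V) (w : List V) : Prop :=
  ∀ i j : Fin w.length, i < j → w.get i = w.get j →
    ∃ k : Fin w.length, i < k ∧ k < j ∧ w.get k ≠ w.get i ∧ ¬ G.Adj (w.get k) (w.get i)

/-- The product `x_{w_1} ⋯ x_{w_ℓ}` depends only on the equivalence class of a word. -/
noncomputable def classProd (G : SimpleGraph V) (x : V → ℝ≥0∞) :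
    Quotient (wordSetoid G) → ℝ≥0∞ :=
  Quotient.lift (fun w : List V => (w.map x).prod) (by
    intro a b h
    induction h with
    | refl => rfl
    | tail _ hs ih =>
        obtain ⟨a', b', u, v, huv, rfl, rfl⟩ := hs
        rw [ih]
        simp only [List.map_append, List.prod_append, List.map_cons, List.prod_cons]
        ring)

/-- `tildeF G x` : the sum over all equivalence classes of words of `∏ x_{w_i}`,
valued in `[0,∞]`. -/
noncomputable def tildeF (G : SimpleGraph V) (x : V → ℝ) : ℝ≥0∞ :=
  ∑' c : Quotient (wordSetoid G), classProd G (fun v => ENNReal.ofReal (x v)) c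

/-- `redF G x` : the sum over all equivalence classes of `G`-reduced words of `∏ x_{w_i}`,
valued in `[0,∞]`. -/
noncomputable def redF (G : SimpleGraph V) (x : V → ℝ) : ℝ≥0∞ :=
  ∑' c : {c : Quotient (wordSetoid G) // ∃ w, IsGReduced G w ∧ Quotient.mk (wordSetoid G) w = c},
    classProd G (fun v => ENNReal.ofReal (x v)) c.1

/-- The clique polynomial `𝕶_{G,V'}(x) = ∑_{cliques K ⊆ V'} (-1)^{|K|} ∏_{v ∈ K} x_v`. -/
noncomputable def cliquePoly (G : SimpleGraph V) (V' : Finset V) (x : V → ℝ) : ℝ :=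
  ∑ K ∈ V'.powerset.filter (fun K : Finset V => G.IsClique (K : Set V)),
    (-1 : ℝ) ^ K.card * ∏ v ∈ K, x v

/-- The Euclidean norm on `ℝ^V`. -/
noncomputable def eucNorm (x : V → ℝ) : ℝ := Real.sqrt (∑ v, x v ^ 2)

/-- `min_{V' ⊆ V} 𝕶_{G,V'}(x)`. -/
noncomputable def minK (G : SimpleGraph V) (x : V → ℝ) : ℝ :=
  Finset.univ.inf' ⟨∅, Finset.mem_univ _⟩ fun V' : Finset V => cliquePoly G V' x

/-- `ρ(u) = inf {r ∈ [0,∞) : min_{V' ⊆ V} 𝕶_{G,V'}(r·u) = 0}`. -/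
noncomputable def rho (G : SimpleGraph V) (u : V → ℝ) : ℝ :=
  sInf {r : ℝ | 0 ≤ r ∧ minK G (r • u) = 0}

/-- The region `R(G) = {x ∈ [0,1]^V : 𝕶_{G,V'}(x) > 0 for all V' ⊆ V}`. -/
def regionR (G : SimpleGraph V) : Set (V → ℝ) :=
  {x | (∀ v, x v ∈ Set.Icc (0 : ℝ) 1) ∧ ∀ V' : Finset V, 0 < cliquePoly G V' x}


section AuxLemmas

lemma cliquePoly_zero' (G : SimpleGraph V) (V' : Finset V) :
    cliquePoly G V' (fun _ => (0:ℝ)) = 1 := by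
  unfold cliquePoly
  rw [Finset.sum_eq_single (∅ : Finset V)]
  · simp
  · intro K hK hne
    obtain ⟨w, hw⟩ := Finset.nonempty_iff_ne_empty.mpr hne
    simp [Finset.prod_eq_zero hw]
  · intro h
    exact absurd (by simp [SimpleGraph.isClique_empty]) h

lemma cliquePoly_singleton (G : SimpleGraph V) (v : V) (x : V → ℝ) :
    cliquePoly G {v} x = 1 - x v := by
  unfold cliquePoly
  have hp : ({v} : Finset V).powerset = {∅, {v}} := by
    ext K; simp [Finset.subset_singleton_iff]
  rw [hp]
  rw [Finset.filter_true_of_mem (by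
    intro K hK
    simp only [Finset.mem_insert, Finset.mem_singleton] at hK
    rcases hK with rfl | rfl
    · simp
    · simpa using G.isClique_singleton v)]
  rw [Finset.sum_pair (Ne.symm (Finset.singleton_ne_empty v))]
  simp; ring

lemma cliquePoly_continuous (G : SimpleGraph V) (V' : Finset V) (u : V → ℝ) :
    Continuous fun r : ℝ => cliquePoly G V' (r • u) := by
  unfold cliquePoly
  refine continuous_finset_sum _ fun K _ => Continuous.mul continuous_const ?_
  refine continuous_finset_prod _ fun v _ => ?_
  simp only [Pi.smul_apply, smul_eq_mul]
  exact continuous_id.mul continuous_const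

lemma cliquePoly_insert (G : SimpleGraph V) (V' : Finset V) (v : V) (hv : v ∉ V')
    (x : V → ℝ) :
    cliquePoly G (insert v V') x =
      cliquePoly G V' x - x v * cliquePoly G (V' ∩ G.neighborFinset v) x := by
  classical
  unfold cliquePoly
  set A := (insert v V').powerset.filter (fun K : Finset V => G.IsClique (K : Set V)) with hA
  rw [← Finset.sum_filter_add_sum_filter_not A (fun K => v ∉ K)]
  have h1 : A.filter (fun K => v ∉ K)
      = V'.powerset.filter (fun K : Finset V => G.IsClique (K : Set V)) := by
    ext K
    simp only [hA, Finset.mem_filter, Finset.mem_powerset]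
    constructor
    · rintro ⟨⟨hsub, hcl⟩, hvK⟩
      refine ⟨fun w hw => ?_, hcl⟩
      rcases Finset.mem_insert.mp (hsub hw) with rfl | h
      · exact absurd hw hvK
      · exact h
    · rintro ⟨hsub, hcl⟩
      exact ⟨⟨hsub.trans (Finset.subset_insert _ _), hcl⟩, fun hvK => hv (hsub hvK)⟩
  have h2 : ∑ K ∈ A.filter (fun K => ¬ v ∉ K), (-1:ℝ) ^ K.card * ∏ w ∈ K, x w
      = ∑ K' ∈ (V' ∩ G.neighborFinset v).powerset.filter
          (fun K : Finset V => G.IsClique (K : Set V)),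
        (-(1:ℝ)) * x v * ((-1:ℝ) ^ K'.card * ∏ w ∈ K', x w) := by
    refine Finset.sum_bij' (fun K _ => K.erase v) (fun K' _ => insert v K') ?_ ?_ ?_ ?_ ?_
    · intro K hK
      simp only [hA, Finset.mem_filter, Finset.mem_powerset, not_not] at hK
      obtain ⟨⟨hsub, hcl⟩, hvK⟩ := hK
      simp only [Finset.mem_filter, Finset.mem_powerset]
      refine ⟨fun w hw => ?_, hcl.subset (by simp [Finset.coe_erase, Set.diff_subset])⟩
      have hwK := Finset.mem_of_mem_erase hw
      have hwv : w ≠ v := Finset.ne_of_mem_erase hw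
      refine Finset.mem_inter.mpr ⟨?_, ?_⟩
      · rcases Finset.mem_insert.mp (hsub hwK) with rfl | h
        · exact absurd rfl hwv
        · exact h
      · rw [SimpleGraph.mem_neighborFinset]
        exact (hcl hvK hwK (fun h => hwv h.symm))
    · intro K' hK'
      simp only [Finset.mem_filter, Finset.mem_powerset] at hK'
      obtain ⟨hsub, hcl⟩ := hK'
      have hvK' : v ∉ K' := fun h => by
        have := Finset.mem_inter.mp (hsub h)
        simp only [SimpleGraph.mem_neighborFinset] at this
        exact G.irrefl this.2
      simp only [hA, Finset.mem_filter, Finset.mem_powerset, not_not]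
      refine ⟨⟨?_, ?_⟩, Finset.mem_insert_self _ _⟩
      · exact Finset.insert_subset_insert v (fun w hw => (Finset.mem_inter.mp (hsub hw)).1)
      · rw [Finset.coe_insert]
        refine hcl.insert (fun w hw hne => ?_)
        have h2 := (Finset.mem_inter.mp (hsub hw)).2
        simp only [SimpleGraph.mem_neighborFinset] at h2
        exact h2
    · intro K hK
      simp only [hA, Finset.mem_filter, not_not] at hK
      exact Finset.insert_erase hK.2
    · intro K' hK'
      simp only [Finset.mem_filter, Finset.mem_powerset] at hK'
      have hvK' : v ∉ K' := fun h => by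
        have := Finset.mem_inter.mp (hK'.1 h)
        simp only [SimpleGraph.mem_neighborFinset] at this
        exact G.irrefl this.2
      exact Finset.erase_insert hvK'
    · intro K hK
      simp only [hA, Finset.mem_filter, not_not] at hK
      have hvK : v ∈ K := hK.2
      show (-1:ℝ) ^ K.card * ∏ w ∈ K, x w
          = -1 * x v * ((-1:ℝ) ^ (K.erase v).card * ∏ w ∈ K.erase v, x w)
      conv_lhs => rw [← Finset.insert_erase hvK]
      rw [Finset.card_insert_of_notMem (Finset.notMem_erase _ _),
        Finset.prod_insert (Finset.notMem_erase _ _)]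
      ring
  rw [h1, h2, Finset.mul_sum, sub_eq_add_neg, ← Finset.sum_neg_distrib]
  congr 1
  exact Finset.sum_congr rfl fun K _ => by ring

lemma continuous_finset_inf' {ι : Type*} (s : Finset ι) (hs : s.Nonempty)
    (f : ι → ℝ → ℝ) (hf : ∀ i ∈ s, Continuous (f i)) :
    Continuous fun r => s.inf' hs (fun i => f i r) := by
  induction s using Finset.cons_induction with
  | empty => exact absurd hs (by simp)
  | cons a s ha ih =>
    rcases s.eq_empty_or_nonempty with rfl | hne
    · simpa using hf a (by simp)
    · have hc := ih hne (fun i hi => hf i (by simp [hi]))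
      have : (fun r => (Finset.cons a s ha).inf' hs fun i => f i r)
          = fun r => min (f a r) (s.inf' hne fun i => f i r) := by
        funext r
        rw [Finset.inf'_cons]
      rw [this]
      exact (hf a (by simp)).min hc

lemma minK_continuous (G : SimpleGraph V) (u : V → ℝ) :
    Continuous fun r : ℝ => minK G (r • u) := by
  unfold minK
  exact continuous_finset_inf' _ _ _ (fun V' _ => cliquePoly_continuous G V' u)

lemma minK_le (G : SimpleGraph V) (x : V → ℝ) (V' : Finset V) :
    minK G x ≤ cliquePoly G V' x :=
  Finset.inf'_le _ (Finset.mem_univ _)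

lemma cliquePoly_univ_le (G : SimpleGraph V) (x : V → ℝ) (hx : ∀ v, 0 ≤ x v)
    (hpos : ∀ W : Finset V, 0 < cliquePoly G W x) :
    ∀ V' : Finset V, cliquePoly G Finset.univ x ≤ cliquePoly G V' x := by
  suffices h : ∀ n : ℕ, ∀ V' : Finset V, V'ᶜ.card = n →
      cliquePoly G Finset.univ x ≤ cliquePoly G V' x by
    intro V'; exact h V'ᶜ.card V' rfl
  intro n
  induction n with
  | zero =>
    intro V' hV'
    have : V' = Finset.univ := by
      have := Finset.card_eq_zero.mp hV'
      rwa [Finset.compl_eq_empty_iff] at this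
    rw [this]
  | succ n ih =>
    intro V' hV'
    obtain ⟨v, hv⟩ : V'ᶜ.Nonempty := by
      rw [← Finset.card_pos, hV']; omega
    have hv' : v ∉ V' := Finset.mem_compl.mp hv
    have hcard : (insert v V')ᶜ.card = n := by
      rw [Finset.compl_insert, Finset.card_erase_of_mem hv, hV']
      omega
    calc cliquePoly G Finset.univ x ≤ cliquePoly G (insert v V') x := ih _ hcard
      _ ≤ cliquePoly G V' x := by
          rw [cliquePoly_insert G V' v hv' x]
          have := mul_nonneg (hx v) (hpos (V' ∩ G.neighborFinset v)).le
          linarith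

end AuxLemmas


/-- Lemma 4.3(1): for a unit vector `u` in the nonnegative orthant, the set
`{r ∈ [0,∞) : 𝕶_G(r·u) = 0}` is nonempty, has a minimum, and this minimum equals `ρ(u)`. -/
theorem rho_isLeast (G : SimpleGraph V) (u : V → ℝ)
    (hu : ∀ v, 0 ≤ u v) (hnorm : eucNorm u = 1) :
    {r : ℝ | 0 ≤ r ∧ cliquePoly G Finset.univ (r • u) = 0}.Nonempty ∧
    IsLeast {r : ℝ | 0 ≤ r ∧ cliquePoly G Finset.univ (r • u) = 0} (rho G u) := by
  classical
  obtain ⟨v, hv⟩ : ∃ v, 0 < u v := by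
    by_contra h
    push_neg at h
    have hz : ∀ w, u w = 0 := fun w => le_antisymm (h w) (hu w)
    have : eucNorm u = 0 := by unfold eucNorm; simp [hz]
    rw [hnorm] at this; norm_num at this
  have hfc : Continuous fun r : ℝ => minK G (r • u) := minK_continuous G u
  have hf0 : minK G ((0:ℝ) • u) = 1 := by
    have h0 : (0:ℝ) • u = fun _ => (0:ℝ) := by funext w; simp
    rw [h0]
    unfold minK
    rw [show (fun V' : Finset V => cliquePoly G V' (fun _ => (0:ℝ))) = fun _ => (1:ℝ) from
      funext fun V' => cliquePoly_zero' G V']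
    exact Finset.inf'_const _ _
  set r0 : ℝ := (u v)⁻¹ with hr0
  have hr0pos : 0 < r0 := inv_pos.mpr hv
  have hfr0 : minK G (r0 • u) ≤ 0 := by
    have hs : cliquePoly G {v} (r0 • u) = 0 := by
      rw [cliquePoly_singleton]
      simp only [Pi.smul_apply, smul_eq_mul, hr0]
      field_simp
      norm_num
    calc minK G (r0 • u) ≤ cliquePoly G {v} (r0 • u) := minK_le G _ _
      _ = 0 := hs
  have hZne : {r : ℝ | 0 ≤ r ∧ minK G (r • u) = 0}.Nonempty := by
    have hsub := intermediate_value_Icc' hr0pos.le hfc.continuousOn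
    have hm : (0:ℝ) ∈ Set.Icc (minK G (r0 • u)) (minK G ((0:ℝ) • u)) :=
      ⟨hfr0, by rw [hf0]; norm_num⟩
    obtain ⟨c, hc, hceq⟩ := hsub hm
    exact ⟨c, hc.1, hceq⟩
  have hZbdd : BddBelow {r : ℝ | 0 ≤ r ∧ minK G (r • u) = 0} := ⟨0, fun r hr => hr.1⟩
  have hZclosed : IsClosed {r : ℝ | 0 ≤ r ∧ minK G (r • u) = 0} := by
    have : {r : ℝ | 0 ≤ r ∧ minK G (r • u) = 0}
        = Set.Ici (0:ℝ) ∩ (fun r : ℝ => minK G (r • u)) ⁻¹' {0} := by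
      ext r; simp [Set.mem_setOf_eq]
    rw [this]
    exact isClosed_Ici.inter (isClosed_singleton.preimage hfc)
  have hrhoZ : rho G u ∈ {r : ℝ | 0 ≤ r ∧ minK G (r • u) = 0} := by
    unfold rho
    exact hZclosed.csInf_mem hZne hZbdd
  obtain ⟨hrho0, hrhoeq⟩ := hrhoZ
  have hrhopos : 0 < rho G u := by
    rcases hrho0.lt_or_eq with h | h
    · exact h
    · exfalso
      rw [← h, hf0] at hrhoeq
      norm_num at hrhoeq
  have key7 : ∀ r : ℝ, 0 ≤ r → r < rho G u → 0 < minK G (r • u) := by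
    intro r hr hrlt
    by_contra hle
    push_neg at hle
    rcases hle.lt_or_eq with hlt | heq
    · have hsub := intermediate_value_Icc' hr hfc.continuousOn
      have hm : (0:ℝ) ∈ Set.Icc (minK G (r • u)) (minK G ((0:ℝ) • u)) :=
        ⟨hlt.le, by rw [hf0]; norm_num⟩
      obtain ⟨c, hc, hceq⟩ := hsub hm
      have hge : rho G u ≤ c := csInf_le hZbdd ⟨hc.1, hceq⟩
      linarith [hc.2]
    · have hge : rho G u ≤ r := csInf_le hZbdd ⟨hr, heq⟩
      linarith
  have key8 : ∀ r : ℝ, 0 ≤ r → r < rho G u → ∀ V' : Finset V,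
      cliquePoly G Finset.univ (r • u) ≤ cliquePoly G V' (r • u) := by
    intro r hr hrlt
    refine cliquePoly_univ_le G _ (fun w => ?_) (fun W => ?_)
    · simp only [Pi.smul_apply, smul_eq_mul]
      exact mul_nonneg hr (hu w)
    · exact lt_of_lt_of_le (key7 r hr hrlt) (minK_le G _ W)
  have hlim : ∀ V' : Finset V,
      cliquePoly G Finset.univ (rho G u • u) ≤ cliquePoly G V' (rho G u • u) := by
    intro V'
    have h1 := ((cliquePoly_continuous G Finset.univ u).tendsto (rho G u)).mono_left
      (nhdsWithin_le_nhds (s := Set.Iio (rho G u)))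
    have h2 := ((cliquePoly_continuous G V' u).tendsto (rho G u)).mono_left
      (nhdsWithin_le_nhds (s := Set.Iio (rho G u)))
    refine le_of_tendsto_of_tendsto h1 h2 ?_
    filter_upwards [Ioo_mem_nhdsLT hrhopos] with r hr
    exact key8 r hr.1.le hr.2 V'
  have huniv : cliquePoly G Finset.univ (rho G u • u) = 0 := by
    have hle : cliquePoly G Finset.univ (rho G u • u) ≤ minK G (rho G u • u) := by
      unfold minK
      exact Finset.le_inf' _ _ fun W _ => hlim W
    have hge := minK_le G (rho G u • u) Finset.univ
    linarith [hrhoeq]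
  refine ⟨⟨rho G u, hrho0, huniv⟩, ⟨⟨hrho0, huniv⟩, ?_⟩⟩
  rintro r ⟨hr0', hr⟩
  by_contra hlt
  push_neg at hlt
  have hpos := key7 r hr0' hlt
  have h2 := minK_le G (r • u) Finset.univ
  rw [hr] at h2
  linarith
end

section
/- The function u ↦ ρ(u) is continuous on the set {u ∈ [0,∞)^V : ‖u‖ = 1} (with the topology induced from ℝ^V). (Lemma 4.3(3).) -/
open scoped Classical ENNReal

set_option linter.unusedSectionVars false

variable {V : Type*} [Fintype V] [DecidableEq V]

namespace RhoCont

open Finset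

variable (G : SimpleGraph V)

/-- The finset of cliques of `G` contained in `V'`. -/
noncomputable def cl (V' : Finset V) : Finset (Finset V) :=
  V'.powerset.filter (fun K => G.IsClique (K : Set V))

lemma mem_cl {V' K : Finset V} : K ∈ cl G V' ↔ K ⊆ V' ∧ G.IsClique (K : Set V) := by
  simp [cl]

lemma cliquePoly_eq (V' : Finset V) (x : V → ℝ) :
    cliquePoly G V' x = ∑ K ∈ cl G V', (-1 : ℝ) ^ K.card * ∏ v ∈ K, x v := rfl

lemma empty_mem_cl (V' : Finset V) : ∅ ∈ cl G V' := by
  rw [mem_cl]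
  exact ⟨Finset.empty_subset _, by simp⟩

lemma cliquePoly_of_zero {V' : Finset V} {x : V → ℝ} (hx : ∀ v ∈ V', x v = 0) :
    cliquePoly G V' x = 1 := by
  rw [cliquePoly_eq, Finset.sum_eq_single ∅]
  · simp
  · intro K hK hne
    obtain ⟨v, hv⟩ := Finset.nonempty_iff_ne_empty.2 hne
    rw [Finset.prod_eq_zero hv (hx v (((mem_cl G).1 hK).1 hv)), mul_zero]
  · intro h; exact absurd (empty_mem_cl G V') h

lemma cliquePoly_smul (V' : Finset V) (u : V → ℝ) (t : ℝ) :
    cliquePoly G V' (t • u)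
      = ∑ K ∈ cl G V', ((-1 : ℝ) ^ K.card * ∏ v ∈ K, u v) * t ^ K.card := by
  rw [cliquePoly_eq]
  refine Finset.sum_congr rfl fun K _ => ?_
  have h : ∏ v ∈ K, (t • u) v = t ^ K.card * ∏ v ∈ K, u v := by
    simp only [Pi.smul_apply, smul_eq_mul]
    rw [Finset.prod_mul_distrib, Finset.prod_const]
  rw [h]; ring

lemma cliquePoly_singleton (v : V) (x : V → ℝ) :
    cliquePoly G {v} x = 1 - x v := by
  unfold cliquePoly
  rw [show ({v} : Finset V).powerset = {∅, {v}} from by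
    ext K; simp [Finset.subset_singleton_iff]]
  rw [Finset.filter_true_of_mem (by
    intro K hK
    rcases Finset.mem_insert.1 hK with h | h
    · subst h; simp
    · rw [Finset.mem_singleton] at h; subst h; simp)]
  rw [Finset.sum_pair (Finset.singleton_ne_empty v).symm]
  simp; ring

lemma deriv_identity (V' : Finset V) (u : V → ℝ) (t : ℝ) :
    ∑ K ∈ cl G V', ((-1 : ℝ) ^ K.card * ∏ v ∈ K, u v) * (K.card * t ^ (K.card - 1))
      = -∑ w ∈ V', u w * cliquePoly G (V'.filter (fun z => G.Adj w z)) (t • u) := by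
  have hterm : ∀ K ∈ cl G V',
      ((-1 : ℝ) ^ K.card * ∏ v ∈ K, u v) * (K.card * t ^ (K.card - 1))
        = ∑ w ∈ K, (-1 : ℝ) ^ K.card * (u w * ∏ v ∈ K.erase w, u v) * t ^ (K.card - 1) := by
    intro K _
    have hsum : ∑ w ∈ K, u w * ∏ v ∈ K.erase w, u v = K.card * ∏ v ∈ K, u v := by
      calc ∑ w ∈ K, u w * ∏ v ∈ K.erase w, u v
          = ∑ _w ∈ K, ∏ v ∈ K, u v :=
            Finset.sum_congr rfl fun w hw => by
              rw [mul_comm]; exact Finset.prod_erase_mul K u hw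
        _ = K.card * ∏ v ∈ K, u v := by rw [Finset.sum_const, nsmul_eq_mul]
    calc ((-1 : ℝ) ^ K.card * ∏ v ∈ K, u v) * (K.card * t ^ (K.card - 1))
        = (∑ w ∈ K, u w * ∏ v ∈ K.erase w, u v) * ((-1 : ℝ) ^ K.card * t ^ (K.card - 1)) := by
          rw [hsum]; ring
      _ = ∑ w ∈ K, (-1 : ℝ) ^ K.card * (u w * ∏ v ∈ K.erase w, u v) * t ^ (K.card - 1) := by
          rw [Finset.sum_mul]
          exact Finset.sum_congr rfl fun w _ => by ring
  rw [Finset.sum_congr rfl hterm]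
  rw [Finset.sum_comm' (t' := V') (s' := fun w => (cl G V').filter (fun K => w ∈ K))
    (fun K w => by
      constructor
      · rintro ⟨hK, hw⟩
        exact ⟨Finset.mem_filter.2 ⟨hK, hw⟩, ((mem_cl G).1 hK).1 hw⟩
      · rintro ⟨hK, _⟩
        exact ⟨(Finset.mem_filter.1 hK).1, (Finset.mem_filter.1 hK).2⟩)]
  rw [← Finset.sum_neg_distrib]
  refine Finset.sum_congr rfl fun w hwV => ?_
  rw [cliquePoly_smul, Finset.mul_sum, ← Finset.sum_neg_distrib]
  refine Finset.sum_nbij' (fun K => K.erase w) (fun K' => insert w K') ?_ ?_ ?_ ?_ ?_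
  · intro K hK
    obtain ⟨hKcl, hwK⟩ := Finset.mem_filter.1 hK
    obtain ⟨hsub, hclq⟩ := (mem_cl G).1 hKcl
    rw [mem_cl]
    constructor
    · intro z hz
      obtain ⟨hzw, hzK⟩ := Finset.mem_erase.1 hz
      exact Finset.mem_filter.2 ⟨hsub hzK, hclq (Finset.mem_coe.2 hwK) (Finset.mem_coe.2 hzK) hzw.symm⟩
    · exact hclq.subset (Finset.coe_subset.2 (Finset.erase_subset _ _))
  · intro K' hK'
    obtain ⟨hsub, hclq⟩ := (mem_cl G).1 hK'
    refine Finset.mem_filter.2 ⟨(mem_cl G).2 ⟨?_, ?_⟩, Finset.mem_insert_self _ _⟩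
    · exact Finset.insert_subset hwV (hsub.trans (Finset.filter_subset _ _))
    · rw [Finset.coe_insert]
      exact hclq.insert fun b hb _ => (Finset.mem_filter.1 (hsub (Finset.mem_coe.1 hb))).2
  · intro K hK
    exact Finset.insert_erase (Finset.mem_filter.1 hK).2
  · intro K' hK'
    refine Finset.erase_insert ?_
    intro hwK'
    exact G.irrefl (Finset.mem_filter.1 (((mem_cl G).1 hK').1 hwK')).2
  · intro K hK
    have hwK : w ∈ K := (Finset.mem_filter.1 hK).2
    have hc : (K.erase w).card + 1 = K.card := Finset.card_erase_add_one hwK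
    rw [← hc]
    simp only [Nat.add_sub_cancel, pow_succ]
    ring

lemma hasDerivAt_cp (V' : Finset V) (u : V → ℝ) (t : ℝ) :
    HasDerivAt (fun s => cliquePoly G V' (s • u))
      (-∑ w ∈ V', u w * cliquePoly G (V'.filter (fun z => G.Adj w z)) (t • u)) t := by
  rw [← deriv_identity]
  have h2 : HasDerivAt (fun s : ℝ => ∑ K ∈ cl G V', ((-1 : ℝ) ^ K.card * ∏ v ∈ K, u v) * s ^ K.card)
      (∑ K ∈ cl G V', ((-1 : ℝ) ^ K.card * ∏ v ∈ K, u v) * (K.card * t ^ (K.card - 1))) t :=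
    HasDerivAt.fun_sum fun K _ => (hasDerivAt_pow K.card t).const_mul _
  rwa [show (fun s : ℝ => ∑ K ∈ cl G V', ((-1 : ℝ) ^ K.card * ∏ v ∈ K, u v) * s ^ K.card)
      = (fun s => cliquePoly G V' (s • u)) from funext fun s => (cliquePoly_smul G V' u s).symm] at h2

lemma continuous_cp_smul (V' : Finset V) (u : V → ℝ) :
    Continuous fun s : ℝ => cliquePoly G V' (s • u) :=
  continuous_iff_continuousAt.2 fun t => (hasDerivAt_cp G V' u t).continuousAt

/-- Key positivity lemma: if all clique polynomials are nonnegative at `r • u`, then they are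
all strictly positive at `s • u` for `0 ≤ s < r`. -/
lemma cp_pos (u : V → ℝ) (hu : ∀ v, 0 ≤ u v) (r : ℝ)
    (hr : ∀ W : Finset V, 0 ≤ cliquePoly G W (r • u)) :
    ∀ V' : Finset V, ∀ s : ℝ, 0 ≤ s → s < r → 0 < cliquePoly G V' (s • u) := by
  intro V'
  induction V' using Finset.strongInduction with
  | _ V' ih =>
    intro s hs hsr
    by_cases hz : ∀ v ∈ V', u v = 0
    · rw [cliquePoly_of_zero G (fun v hv => by
        simp [Pi.smul_apply, hz v hv])]
      norm_num
    · push_neg at hz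
      obtain ⟨v, hvV, hv0⟩ := hz
      have hv0 : 0 < u v := (hu v).lt_of_ne (Ne.symm hv0)
      have hproper : ∀ w ∈ V', V'.filter (fun z => G.Adj w z) ⊂ V' := fun w hw =>
        Finset.filter_ssubset.2 ⟨w, hw, fun h => G.irrefl h⟩
      have hanti : StrictAntiOn (fun s => cliquePoly G V' (s • u)) (Set.Icc 0 r) := by
        apply strictAntiOn_of_deriv_neg (convex_Icc 0 r)
          (continuous_cp_smul G V' u).continuousOn
        intro x hx
        rw [interior_Icc, Set.mem_Ioo] at hx
        rw [(hasDerivAt_cp G V' u x).deriv, neg_lt_zero]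
        refine Finset.sum_pos' (fun w hw => mul_nonneg (hu w)
          (le_of_lt (ih _ (hproper w hw) x (le_of_lt hx.1) hx.2)))
          ⟨v, hvV, mul_pos hv0 (ih _ (hproper v hvV) x (le_of_lt hx.1) hx.2)⟩
      have hlt := hanti (Set.mem_Icc.2 ⟨hs, hsr.le.trans le_rfl⟩)
        (Set.right_mem_Icc.2 (hs.trans hsr.le)) hsr
      exact lt_of_le_of_lt (hr V') hlt

lemma minK_le (x : V → ℝ) (V' : Finset V) : minK G x ≤ cliquePoly G V' x :=
  Finset.inf'_le _ (Finset.mem_univ _)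

lemma pos_minK_iff (x : V → ℝ) : 0 < minK G x ↔ ∀ V' : Finset V, 0 < cliquePoly G V' x := by
  rw [minK]
  exact ⟨fun h V' => (Finset.lt_inf'_iff _).1 h V' (Finset.mem_univ _),
    fun h => (Finset.lt_inf'_iff _).2 fun V' _ => h V'⟩

lemma minK_zero' : minK G (0 : V → ℝ) = 1 := by
  have h : ∀ V' : Finset V, cliquePoly G V' (0 : V → ℝ) = 1 :=
    fun V' => cliquePoly_of_zero G (fun v _ => rfl)
  rw [minK, show (fun V' : Finset V => cliquePoly G V' (0 : V → ℝ)) = fun _ => (1 : ℝ) from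
    funext h]
  exact Finset.inf'_const _ _

lemma continuous_cp (V' : Finset V) : Continuous fun x : V → ℝ => cliquePoly G V' x := by
  unfold cliquePoly
  exact continuous_finset_sum _ fun K _ =>
    continuous_const.mul (continuous_finset_prod _ fun v _ => continuous_apply v)

lemma continuous_inf'_aux {ι : Type*} (s : Finset ι) (hs : s.Nonempty) (f : ι → (V → ℝ) → ℝ)
    (hf : ∀ i, Continuous (f i)) : Continuous fun x => s.inf' hs fun i => f i x := by
  induction hs using Finset.Nonempty.cons_induction with
  | singleton a => simpa using hf a
  | cons a s h hs ih =>
      have : (fun x => (Finset.cons a s h).inf' (Finset.cons_nonempty h) fun i => f i x)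
          = fun x => min (f a x) (s.inf' hs fun i => f i x) := by
        funext x
        rw [Finset.inf'_cons hs]
      rw [this]
      exact (hf a).min ih

lemma continuous_minK : Continuous fun x : V → ℝ => minK G x :=
  continuous_inf'_aux _ _ _ (continuous_cp G)

lemma exists_pos_coord {u : V → ℝ} (hu : ∀ v, 0 ≤ u v) (hn : eucNorm u = 1) :
    ∃ v, 0 < u v := by
  by_contra h
  push_neg at h
  have hz : ∀ v, u v = 0 := fun v => le_antisymm (h v) (hu v)
  rw [eucNorm] at hn
  simp [hz] at hn

lemma exists_root {u : V → ℝ} (hu : ∀ v, 0 ≤ u v) (hn : eucNorm u = 1) :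
    ∃ t : ℝ, 0 ≤ t ∧ minK G (t • u) = 0 := by
  obtain ⟨v, hv⟩ := exists_pos_coord hu hn
  set R : ℝ := (u v)⁻¹ + 1 with hR
  have hR0 : 0 < R := by positivity
  have hfR : minK G (R • u) < 0 := by
    refine lt_of_le_of_lt (minK_le G _ {v}) ?_
    rw [cliquePoly_singleton]
    have : R * u v = 1 + u v := by
      rw [hR, add_mul, inv_mul_cancel₀ (ne_of_gt hv), one_mul]
    rw [show (R • u) v = R * u v from rfl, this]
    linarith
  have hcont : ContinuousOn (fun t : ℝ => minK G (t • u)) (Set.Icc 0 R) :=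
    ((continuous_minK G).comp (continuous_id.smul continuous_const)).continuousOn
  have h0 : minK G ((0 : ℝ) • u) = 1 := by rw [zero_smul]; exact minK_zero' G
  have := intermediate_value_Icc' (le_of_lt hR0) hcont
  have h0mem : (0 : ℝ) ∈ Set.Icc (minK G (R • u)) (minK G ((0:ℝ) • u)) := by
    rw [h0]; exact ⟨le_of_lt hfR, by norm_num⟩
  obtain ⟨t, ht, htv⟩ := this h0mem
  exact ⟨t, ht.1, htv⟩

lemma rho_mem {u : V → ℝ} (hu : ∀ v, 0 ≤ u v) (hn : eucNorm u = 1) :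
    0 ≤ rho G u ∧ minK G (rho G u • u) = 0 := by
  have hclosed : IsClosed {r : ℝ | 0 ≤ r ∧ minK G (r • u) = 0} := by
    rw [show {r : ℝ | 0 ≤ r ∧ minK G (r • u) = 0}
        = {r : ℝ | 0 ≤ r} ∩ {r : ℝ | minK G (r • u) = 0} from rfl]
    exact (isClosed_le continuous_const continuous_id).inter
      (isClosed_eq ((continuous_minK G).comp (continuous_id.smul continuous_const))
        continuous_const)
  have hne : {r : ℝ | 0 ≤ r ∧ minK G (r • u) = 0}.Nonempty := by
    obtain ⟨t, h1, h2⟩ := exists_root G hu hn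
    exact ⟨t, h1, h2⟩
  have hbdd : BddBelow {r : ℝ | 0 ≤ r ∧ minK G (r • u) = 0} := ⟨0, fun x hx => hx.1⟩
  exact hclosed.csInf_mem hne hbdd

lemma rho_pos {u : V → ℝ} (hu : ∀ v, 0 ≤ u v) (hn : eucNorm u = 1) : 0 < rho G u := by
  obtain ⟨h1, h2⟩ := rho_mem G hu hn
  rcases h1.lt_or_eq with h | h
  · exact h
  · exfalso
    rw [← h, zero_smul, minK_zero' G] at h2
    norm_num at h2

lemma minK_pos_of_lt {u : V → ℝ} (hu : ∀ v, 0 ≤ u v) (hn : eucNorm u = 1) {t : ℝ}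
    (ht0 : 0 ≤ t) (ht : t < rho G u) : 0 < minK G (t • u) := by
  have h2 := (rho_mem G hu hn).2
  have hnn : ∀ W : Finset V, 0 ≤ cliquePoly G W (rho G u • u) :=
    fun W => h2 ▸ minK_le G _ W
  exact (pos_minK_iff G _).2 fun V' => cp_pos G u hu _ hnn V' t ht0 ht

lemma minK_neg_of_gt {u : V → ℝ} (hu : ∀ v, 0 ≤ u v) (hn : eucNorm u = 1) {t : ℝ}
    (ht : rho G u < t) : minK G (t • u) < 0 := by
  by_contra h
  push_neg at h
  have hnn : ∀ W : Finset V, 0 ≤ cliquePoly G W (t • u) :=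
    fun W => le_trans h (minK_le G _ W)
  have hpos : 0 < minK G (rho G u • u) :=
    (pos_minK_iff G _).2 fun V' => cp_pos G u hu t hnn V' _ (rho_mem G hu hn).1 ht
  rw [(rho_mem G hu hn).2] at hpos
  norm_num at hpos

end RhoCont

/-- Lemma 4.3(3): `ρ` is continuous on the unit sphere of the nonnegative
orthant. -/
theorem rho_continuousOn (G : SimpleGraph V) :
    ContinuousOn (rho G) {u : V → ℝ | (∀ v, 0 ≤ u v) ∧ eucNorm u = 1} := by
  rw [Metric.continuousOn_iff]
  intro u₀ hu₀ ε hε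
  obtain ⟨hnn, hnrm⟩ := hu₀
  have hρ0 : 0 < rho G u₀ := RhoCont.rho_pos G hnn hnrm
  set ρ₀ := rho G u₀ with hρ₀
  set rm : ℝ := max (ρ₀ - ε / 2) 0 with hrm
  set rp : ℝ := ρ₀ + ε / 2 with hrp
  have hrm0 : 0 ≤ rm := le_max_right _ _
  have hrmlt : rm < ρ₀ := max_lt (by linarith) hρ0
  have h1 : 0 < minK G (rm • u₀) := RhoCont.minK_pos_of_lt G hnn hnrm hrm0 hrmlt
  have h2 : minK G (rp • u₀) < 0 := RhoCont.minK_neg_of_gt G hnn hnrm (by rw [hrp]; linarith)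
  have hcm : Continuous fun u : V → ℝ => minK G (rm • u) :=
    (RhoCont.continuous_minK G).comp (continuous_const_smul rm)
  have hcp : Continuous fun u : V → ℝ => minK G (rp • u) :=
    (RhoCont.continuous_minK G).comp (continuous_const_smul rp)
  have hopen : IsOpen {u : V → ℝ | 0 < minK G (rm • u) ∧ minK G (rp • u) < 0} :=
    (isOpen_lt continuous_const hcm).and (isOpen_lt hcp continuous_const)
  obtain ⟨δ, hδ, hball⟩ := Metric.isOpen_iff.1 hopen u₀ ⟨h1, h2⟩
  refine ⟨δ, hδ, fun u hu hdist => ?_⟩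
  obtain ⟨hB1, hB2⟩ := hball (Metric.mem_ball.2 hdist)
  have hun : ∀ v, 0 ≤ u v := hu.1
  have hunn : eucNorm u = 1 := hu.2
  have hρu := RhoCont.rho_mem G hun hunn
  have hlow : rm < rho G u := by
    by_contra h
    push_neg at h
    rcases h.lt_or_eq with hlt | heq
    · have := RhoCont.minK_neg_of_gt G hun hunn hlt
      linarith
    · rw [← heq] at hB1
      rw [hρu.2] at hB1
      norm_num at hB1
  have hhigh : rho G u < rp := by
    by_contra h
    push_neg at h
    rcases h.lt_or_eq with hlt | heq
    · have := RhoCont.minK_pos_of_lt G hun hunn (by rw [hrp]; positivity) hlt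
      linarith
    · rw [heq] at hB2
      rw [hρu.2] at hB2
      norm_num at hB2
  rw [Real.dist_eq, abs_lt]
  have hml : ρ₀ - ε / 2 ≤ rm := le_max_left _ _
  constructor
  · linarith
  · rw [hrp] at hhigh; linarith
end

section
/- Suppose G is join-irreducible. Then for every x in the frontier of R(G) (taken in ℝ^V) with x_v > 0 for all v ∈ V, one has 𝕶_G(x) = 0, 𝕶_{G,V'}(x) > 0 for every proper subset V' ⊊ V, and ∂_j 𝕶_G(x) < 0 for every j ∈ V; in particular the gradient of 𝕶_G does not vanish at x. (Proposition 4.6.) -/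
open scoped Classical ENNReal

set_option linter.unusedSectionVars false

variable {V : Type*} [Fintype V] [DecidableEq V]

lemma cliquePoly_empty (G : SimpleGraph V) (x : V → ℝ) : cliquePoly G ∅ x = 1 := by
  rw [cliquePoly, Finset.powerset_empty, Finset.filter_singleton]
  simp

lemma cliquePoly_recursion (G : SimpleGraph V) (V' : Finset V) (j : V) (hj : j ∈ V')
    (x : V → ℝ) :
    cliquePoly G V' x = cliquePoly G (V'.erase j) x -
      x j * cliquePoly G ((V'.erase j).filter (fun v => G.Adj j v)) x := by
  classical
  unfold cliquePoly
  rw [← Finset.sum_filter_add_sum_filter_not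
    (V'.powerset.filter (fun K : Finset V => G.IsClique (K : Set V))) (fun K => j ∉ K)]
  have h1 : (V'.powerset.filter (fun K : Finset V => G.IsClique (K : Set V))).filter
      (fun K => j ∉ K) =
      (V'.erase j).powerset.filter (fun K : Finset V => G.IsClique (K : Set V)) := by
    ext K
    simp only [Finset.mem_filter, Finset.mem_powerset, Finset.subset_erase]
    tauto
  rw [h1]
  have h2 : ∑ K ∈ (V'.powerset.filter (fun K : Finset V => G.IsClique (K : Set V))).filter
      (fun K => ¬ j ∉ K), (-1 : ℝ) ^ K.card * ∏ v ∈ K, x v =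
      ∑ K ∈ ((V'.erase j).filter (fun v => G.Adj j v)).powerset.filter
        (fun K : Finset V => G.IsClique (K : Set V)),
        (- x j) * ((-1 : ℝ) ^ K.card * ∏ v ∈ K, x v) := by
    apply Finset.sum_nbij' (fun K => K.erase j) (fun K => insert j K)
    · intro K hK
      simp only [Finset.mem_filter, Finset.mem_powerset, not_not] at hK ⊢
      obtain ⟨⟨hsub, hcl⟩, hjK⟩ := hK
      refine ⟨fun v hv => ?_, hcl.subset (by simp [Finset.erase_subset])⟩
      simp only [Finset.mem_erase] at hv
      simp only [Finset.mem_filter, Finset.mem_erase]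
      exact ⟨⟨hv.1, hsub hv.2⟩, hcl (Finset.mem_coe.2 hjK) (Finset.mem_coe.2 hv.2) (Ne.symm hv.1)⟩
    · intro K hK
      simp only [Finset.mem_filter, Finset.mem_powerset, not_not] at hK ⊢
      obtain ⟨hsub, hcl⟩ := hK
      refine ⟨⟨fun v hv => ?_, ?_⟩, Finset.mem_insert_self _ _⟩
      · rcases Finset.mem_insert.1 hv with rfl | hv
        · exact hj
        · exact Finset.mem_of_mem_erase (Finset.mem_filter.1 (hsub hv)).1
      · rw [Finset.coe_insert]
        exact hcl.insert fun b hb hne => (Finset.mem_filter.1 (hsub hb)).2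
    · intro K hK
      simp only [Finset.mem_filter, Finset.mem_powerset, not_not] at hK
      exact Finset.insert_erase hK.2
    · intro K hK
      simp only [Finset.mem_filter, Finset.mem_powerset] at hK
      have hjB : j ∉ K := fun h => G.irrefl ((Finset.mem_filter.1 (hK.1 h)).2)
      exact Finset.erase_insert hjB
    · intro K hK
      simp only [Finset.mem_filter, Finset.mem_powerset, not_not] at hK
      have h0 : 0 < K.card := Finset.card_pos.2 ⟨j, hK.2⟩
      have hc : K.card = (K.erase j).card + 1 := by
        rw [Finset.card_erase_of_mem hK.2]; omega
      have hp : ∏ v ∈ K, x v = x j * ∏ v ∈ K.erase j, x v :=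
        (Finset.mul_prod_erase K x hK.2).symm
      rw [hc, hp, pow_succ]
      ring
  rw [h2, ← Finset.mul_sum]
  ring

lemma cliquePoly_differentiable (G : SimpleGraph V) (W : Finset V) :
    Differentiable ℝ (cliquePoly G W) := by
  unfold cliquePoly
  apply Differentiable.fun_sum
  intro K _
  apply Differentiable.const_mul
  intro x
  exact (HasFDerivAt.finset_prod (fun v _ =>
    (ContinuousLinearMap.proj v : (V → ℝ) →L[ℝ] ℝ).hasFDerivAt)).differentiableAt

lemma cliquePoly_indep (G : SimpleGraph V) (W : Finset V) (j : V) (hj : j ∉ W)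
    (x y : V → ℝ) (h : ∀ v, v ≠ j → x v = y v) : cliquePoly G W x = cliquePoly G W y := by
  unfold cliquePoly
  apply Finset.sum_congr rfl
  intro K hK
  simp only [Finset.mem_filter, Finset.mem_powerset] at hK
  congr 1
  apply Finset.prod_congr rfl
  intro v hv
  exact h v (fun hvj => hj (hvj ▸ hK.1 hv))

/-- Proposition 4.6: if `G` is join-irreducible, then at every strictly
positive point `x` of the frontier of `R(G)` one has `𝕶_G(x) = 0`, `𝕶_{G,V'}(x) > 0` for
all proper `V' ⊊ V`, and all partial derivatives of `𝕶_G` are strictly negative at `x`. -/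
theorem frontier_regionR_of_joinIrreducible (G : SimpleGraph V)
    (hirr : ¬ ∃ A : Finset V, A.Nonempty ∧ Aᶜ.Nonempty ∧ ∀ a ∈ A, ∀ b ∈ Aᶜ, G.Adj a b)
    (x : V → ℝ) (hx : x ∈ frontier (regionR G)) (hpos : ∀ v, 0 < x v) :
    cliquePoly G Finset.univ x = 0 ∧
    (∀ V' : Finset V, V' ⊂ Finset.univ → 0 < cliquePoly G V' x) ∧
    (∀ j : V, fderiv ℝ (cliquePoly G Finset.univ) x (Pi.single j 1) < 0) := by
  classical
  have hxcl : x ∈ closure (regionR G) := hx.1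
  have hxint : x ∉ interior (regionR G) := hx.2
  have hnn : ∀ W : Finset V, 0 ≤ cliquePoly G W x := by
    intro W
    have hclosed : IsClosed {y : V → ℝ | 0 ≤ cliquePoly G W y} :=
      isClosed_le continuous_const (cliquePoly_differentiable G W).continuous
    exact closure_minimal (fun y hy => le_of_lt (hy.2 W)) hclosed hxcl
  have hsingle : ∀ v, cliquePoly G {v} x = 1 - x v := by
    intro v
    have h := cliquePoly_recursion G {v} v (Finset.mem_singleton_self v) x
    simpa [Finset.erase_singleton, cliquePoly_empty] using h
  have hzero : ∃ W : Finset V, cliquePoly G W x = 0 := by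
    by_contra hcon
    push_neg at hcon
    have hposW : ∀ W, 0 < cliquePoly G W x :=
      fun W => lt_of_le_of_ne (hnn W) (Ne.symm (hcon W))
    have hlt1 : ∀ v, x v < 1 := by
      intro v
      have := hposW {v}
      rw [hsingle v] at this
      linarith
    set U := {y : V → ℝ | ∀ v, 0 < y v ∧ y v < 1} ∩
      {y : V → ℝ | ∀ W : Finset V, 0 < cliquePoly G W y} with hU
    have hUopen : IsOpen U := by
      apply IsOpen.inter
      · rw [Set.setOf_forall]
        apply isOpen_iInter_of_finite
        intro v
        exact IsOpen.inter (isOpen_lt continuous_const (continuous_apply v))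
          (isOpen_lt (continuous_apply v) continuous_const)
      · rw [Set.setOf_forall]
        apply isOpen_iInter_of_finite
        intro W
        exact isOpen_lt continuous_const (cliquePoly_differentiable G W).continuous
    have hxU : x ∈ U := ⟨fun v => ⟨hpos v, hlt1 v⟩, hposW⟩
    have hsub : U ⊆ regionR G :=
      fun y hy => ⟨fun v => ⟨(hy.1 v).1.le, (hy.1 v).2.le⟩, hy.2⟩
    exact hxint (mem_interior.2 ⟨U, hsub, hUopen, hxU⟩)
  obtain ⟨W, hW0, hWmin⟩ : ∃ W : Finset V, cliquePoly G W x = 0 ∧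
      ∀ W' : Finset V, cliquePoly G W' x = 0 → W.card ≤ W'.card := by
    obtain ⟨W, hW⟩ := hzero
    obtain ⟨W', hW', hmin⟩ := Finset.exists_min_image
      (Finset.univ.filter fun W : Finset V => cliquePoly G W x = 0)
      Finset.card ⟨W, by simp [hW]⟩
    exact ⟨W', (Finset.mem_filter.1 hW').2, fun W'' h'' => hmin W'' (by simp [h''])⟩
  have hproper : ∀ W' : Finset V, W' ⊂ W → 0 < cliquePoly G W' x := by
    intro W' hss
    rcases (hnn W').lt_or_eq with h | h
    · exact h
    · exact absurd (hWmin W' h.symm) (not_le.2 (Finset.card_lt_card hss))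
  have hWne : W.Nonempty := by
    rcases W.eq_empty_or_nonempty with rfl | h
    · rw [cliquePoly_empty] at hW0; norm_num at hW0
    · exact h
  have hadj : ∀ j, j ∉ W → ∀ w ∈ W, G.Adj j w := by
    intro j hj
    have hrec := cliquePoly_recursion G (insert j W) j (Finset.mem_insert_self j W) x
    rw [Finset.erase_insert hj, hW0] at hrec
    set B := W.filter (fun v => G.Adj j v) with hB
    have h1 : 0 ≤ cliquePoly G (insert j W) x := hnn _
    have h2 : 0 ≤ cliquePoly G B x := hnn _
    have hxj := hpos j
    have hBzero : cliquePoly G B x = 0 := by nlinarith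
    have hBW : B ⊆ W := Finset.filter_subset _ _
    have hBeq : B = W := by
      by_contra hBne
      have hss : B ⊂ W := ⟨hBW, fun h => hBne (subset_antisymm hBW h)⟩
      have := hproper B hss
      rw [hBzero] at this
      exact lt_irrefl 0 this
    intro w hw
    exact (Finset.mem_filter.1 (hBeq ▸ hw : w ∈ B)).2
  have hWuniv : W = Finset.univ := by
    by_contra hne
    have hc : Wᶜ.Nonempty := by
      rw [← Finset.card_pos, Finset.card_compl]
      have h := Finset.card_lt_card (Finset.ssubset_univ_iff.2 hne)
      rw [Finset.card_univ] at h
      omega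
    exact hirr ⟨W, hWne, hc, fun a ha b hb =>
      (hadj b (Finset.mem_compl.1 hb) a ha).symm⟩
  subst hWuniv
  refine ⟨hW0, hproper, ?_⟩
  intro j
  set A := Finset.univ.erase j with hA
  set B := A.filter (fun v => G.Adj j v) with hB
  have hjA : j ∉ A := Finset.notMem_erase j _
  have hjB : j ∉ B := fun h => hjA (Finset.mem_of_mem_filter j h)
  have hBpos : 0 < cliquePoly G B x :=
    hproper B (Finset.ssubset_univ_iff.2 (fun h => hjB (h ▸ Finset.mem_univ j)))
  have hL : HasDerivAt (fun t : ℝ => x + t • (Pi.single j 1 : V → ℝ))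
      (Pi.single j 1 : V → ℝ) 0 := by
    simpa using (((hasDerivAt_id (0 : ℝ)).smul_const (Pi.single j 1 : V → ℝ)).const_add x)
  have hF := ((cliquePoly_differentiable G Finset.univ) x).hasFDerivAt
  have hF' : HasFDerivAt (cliquePoly G Finset.univ) (fderiv ℝ (cliquePoly G Finset.univ) x)
      (x + (0 : ℝ) • (Pi.single j 1 : V → ℝ)) := by simpa using hF
  have hcomp := hF'.comp_hasDerivAt 0 hL
  have heq : (fun t : ℝ => cliquePoly G Finset.univ (x + t • (Pi.single j 1 : V → ℝ))) =
      fun t => cliquePoly G A x - (x j + t) * cliquePoly G B x := by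
    funext t
    rw [cliquePoly_recursion G Finset.univ j (Finset.mem_univ j)]
    have hcoord : ∀ v, v ≠ j → (x + t • (Pi.single j 1 : V → ℝ)) v = x v := by
      intro v hv
      simp [Pi.single_apply, hv]
    have hj' : (x + t • (Pi.single j 1 : V → ℝ)) j = x j + t := by simp
    rw [cliquePoly_indep G A j hjA _ x hcoord, cliquePoly_indep G B j hjB _ x hcoord, hj']
  have hg : HasDerivAt (fun t : ℝ => cliquePoly G A x - (x j + t) * cliquePoly G B x)
      (-(cliquePoly G B x)) 0 := by
    have h1 : HasDerivAt (fun t : ℝ => x j + t) 1 0 := (hasDerivAt_id 0).const_add (x j)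
    simpa using ((h1.mul_const (cliquePoly G B x)).const_sub (cliquePoly G A x))
  have hcomp' : HasDerivAt (fun t : ℝ => cliquePoly G Finset.univ (x + t • (Pi.single j 1 : V → ℝ)))
      (fderiv ℝ (cliquePoly G Finset.univ) x (Pi.single j 1)) 0 := hcomp
  rw [heq] at hcomp'
  have huniq := hcomp'.unique hg
  rw [huniq]
  linarith
end

section
/- R(G) is star-shaped about the origin: if x ∈ R(G) and α ∈ [0,1], then α·x ∈ R(G). -/
open scoped Classical ENNReal

set_option linter.unusedSectionVars false

variable {V : Type*} [Fintype V] [DecidableEq V]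

lemma cliquePoly_smul (G : SimpleGraph V) (V' : Finset V) (x : V → ℝ) (t : ℝ) :
    cliquePoly G V' (t • x) =
      ∑ K ∈ V'.powerset.filter (fun K : Finset V => G.IsClique (K : Set V)),
        ((-1 : ℝ) ^ K.card * ∏ v ∈ K, x v) * t ^ K.card := by
  refine Finset.sum_congr rfl fun K _ => ?_
  have : ∏ v ∈ K, (t • x) v = t ^ K.card * ∏ v ∈ K, x v := by
    simp [Finset.prod_mul_distrib]
  rw [this]; ring

lemma cliquePoly_deriv_key (G : SimpleGraph V) (V' : Finset V) (x : V → ℝ) (t : ℝ) :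
    ∑ K ∈ V'.powerset.filter (fun K : Finset V => G.IsClique (K : Set V)),
        ((-1 : ℝ) ^ K.card * ∏ v ∈ K, x v) * ((K.card : ℝ) * t ^ (K.card - 1)) =
      -∑ v ∈ V', x v * cliquePoly G (V'.filter (fun u => G.Adj v u)) (t • x) := by
  classical
  set S := V'.powerset.filter (fun K : Finset V => G.IsClique (K : Set V)) with hS
  have step1 : ∀ K ∈ S,
      ((-1 : ℝ) ^ K.card * ∏ v ∈ K, x v) * ((K.card : ℝ) * t ^ (K.card - 1)) =
      ∑ v ∈ K, x v * ((-1 : ℝ) ^ K.card * t ^ (K.card - 1) * ∏ u ∈ K.erase v, x u) := by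
    intro K _
    have h1 : ∑ v ∈ K, x v * ((-1 : ℝ) ^ K.card * t ^ (K.card - 1) * ∏ u ∈ K.erase v, x u)
        = ∑ v ∈ K, ((-1 : ℝ) ^ K.card * t ^ (K.card - 1)) * ((∏ u ∈ K.erase v, x u) * x v) :=
      Finset.sum_congr rfl fun v _ => by ring
    have h2 : ∀ v ∈ K, ((-1 : ℝ) ^ K.card * t ^ (K.card - 1)) * ((∏ u ∈ K.erase v, x u) * x v)
        = ((-1 : ℝ) ^ K.card * t ^ (K.card - 1)) * ∏ u ∈ K, x u := by
      intro v hv; rw [Finset.prod_erase_mul _ _ hv]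
    rw [h1, Finset.sum_congr rfl h2, Finset.sum_const, nsmul_eq_mul]
    ring
  rw [Finset.sum_congr rfl step1]
  -- swap order of summation
  have hsubV : ∀ K ∈ S, K ⊆ V' := fun K hK =>
    Finset.mem_powerset.1 (Finset.mem_filter.1 hK).1
  have step2 : ∑ K ∈ S, ∑ v ∈ K, x v * ((-1 : ℝ) ^ K.card * t ^ (K.card - 1) * ∏ u ∈ K.erase v, x u)
      = ∑ v ∈ V', ∑ K ∈ S.filter (fun K => v ∈ K),
          x v * ((-1 : ℝ) ^ K.card * t ^ (K.card - 1) * ∏ u ∈ K.erase v, x u) := by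
    have : ∀ K ∈ S, ∑ v ∈ K, x v * ((-1 : ℝ) ^ K.card * t ^ (K.card - 1) * ∏ u ∈ K.erase v, x u)
        = ∑ v ∈ V', if v ∈ K then
            x v * ((-1 : ℝ) ^ K.card * t ^ (K.card - 1) * ∏ u ∈ K.erase v, x u) else 0 := by
      intro K hK
      rw [← Finset.sum_filter]
      congr 1
      exact (Finset.filter_mem_eq_inter.trans (by
        rw [Finset.inter_eq_right.2 (hsubV K hK)])).symm
    rw [Finset.sum_congr rfl this, Finset.sum_comm]
    exact Finset.sum_congr rfl fun v _ => (Finset.sum_filter _ _).symm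
  rw [step2, ← Finset.sum_neg_distrib]
  refine Finset.sum_congr rfl fun v hv => ?_
  -- the inner bijection K ↦ K.erase v
  rw [cliquePoly_smul, Finset.mul_sum, ← Finset.sum_neg_distrib]
  refine Finset.sum_bij' (fun K _ => K.erase v) (fun K' _ => insert v K') ?_ ?_ ?_ ?_ ?_
  · -- maps into target
    intro K hK
    obtain ⟨hKS, hvK⟩ := Finset.mem_filter.1 hK
    obtain ⟨hKpow, hKcl⟩ := Finset.mem_filter.1 hKS
    refine Finset.mem_filter.2 ⟨Finset.mem_powerset.2 fun u hu => ?_, ?_⟩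
    · obtain ⟨hne, huK⟩ := Finset.mem_erase.1 hu
      exact Finset.mem_filter.2 ⟨Finset.mem_powerset.1 hKpow huK,
        hKcl (by exact_mod_cast hvK) (by exact_mod_cast huK) (Ne.symm hne)⟩
    · exact hKcl.subset (by exact_mod_cast Finset.erase_subset v K)
  · -- inverse maps into source
    intro K' hK'
    obtain ⟨hK'pow, hK'cl⟩ := Finset.mem_filter.1 hK'
    have hK'sub := Finset.mem_powerset.1 hK'pow
    refine Finset.mem_filter.2 ⟨Finset.mem_filter.2 ⟨Finset.mem_powerset.2 ?_, ?_⟩,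
      Finset.mem_insert_self v K'⟩
    · intro u hu
      rcases Finset.mem_insert.1 hu with rfl | hu
      · exact hv
      · exact (Finset.mem_filter.1 (hK'sub hu)).1
    · rw [Finset.coe_insert]
      exact hK'cl.insert fun b hb hne =>
        (Finset.mem_filter.1 (hK'sub (by exact_mod_cast hb))).2
  · intro K hK
    exact Finset.insert_erase (Finset.mem_filter.1 hK).2
  · intro K' hK'
    have hK'sub := Finset.mem_powerset.1 (Finset.mem_filter.1 hK').1
    have hvK' : v ∉ K' := fun h => G.irrefl ((Finset.mem_filter.1 (hK'sub h)).2)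
    exact Finset.erase_insert hvK'
  · intro K hK
    have hvK : v ∈ K := (Finset.mem_filter.1 hK).2
    have hcard : K.card = (K.erase v).card + 1 := (Finset.card_erase_add_one hvK).symm
    rw [hcard]
    simp only [Nat.add_sub_cancel, pow_succ]
    ring

lemma hasDerivAt_cliquePoly (G : SimpleGraph V) (V' : Finset V) (x : V → ℝ) (t : ℝ) :
    HasDerivAt (fun t : ℝ => cliquePoly G V' (t • x))
      (-∑ v ∈ V', x v * cliquePoly G (V'.filter (fun u => G.Adj v u)) (t • x)) t := by
  have h : HasDerivAt (fun t : ℝ =>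
      ∑ K ∈ V'.powerset.filter (fun K : Finset V => G.IsClique (K : Set V)),
        ((-1 : ℝ) ^ K.card * ∏ v ∈ K, x v) * t ^ K.card)
      (∑ K ∈ V'.powerset.filter (fun K : Finset V => G.IsClique (K : Set V)),
        ((-1 : ℝ) ^ K.card * ∏ v ∈ K, x v) * ((K.card : ℝ) * t ^ (K.card - 1))) t := by
    refine HasDerivAt.fun_sum fun K _ => ?_
    exact (hasDerivAt_pow K.card t).const_mul _
  rw [cliquePoly_deriv_key G V' x t] at h
  exact h.congr_of_eventuallyEq (Filter.Eventually.of_forall fun s => cliquePoly_smul G V' x s)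

lemma cliquePoly_smul_pos (G : SimpleGraph V) (x : V → ℝ) (hx01 : ∀ v, x v ∈ Set.Icc (0:ℝ) 1)
    (hxpos : ∀ V' : Finset V, 0 < cliquePoly G V' x) (V' : Finset V) :
    ∀ t ∈ Set.Icc (0:ℝ) 1, 0 < cliquePoly G V' (t • x) := by
  induction V' using Finset.strongInduction with
  | _ V' ih =>
    intro t ht
    have hanti : AntitoneOn (fun t : ℝ => cliquePoly G V' (t • x)) (Set.Icc 0 1) := by
      refine antitoneOn_of_deriv_nonpos (convex_Icc 0 1)
        (fun s _ => (hasDerivAt_cliquePoly G V' x s).continuousAt.continuousWithinAt)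
        (fun s _ => (hasDerivAt_cliquePoly G V' x s).differentiableAt.differentiableWithinAt)
        (fun s hs => ?_)
      rw [(hasDerivAt_cliquePoly G V' x s).deriv, neg_nonpos]
      rw [interior_Icc] at hs
      refine Finset.sum_nonneg fun v hv => mul_nonneg (hx01 v).1 (le_of_lt ?_)
      have hss : V'.filter (fun u => G.Adj v u) ⊂ V' := by
        refine Finset.ssubset_iff_of_subset (Finset.filter_subset _ _) |>.2 ⟨v, hv, ?_⟩
        simp [G.irrefl]
      exact ih _ hss s ⟨hs.1.le, hs.2.le⟩
    have h1 : (1 : ℝ) ∈ Set.Icc (0:ℝ) 1 := ⟨zero_le_one, le_refl _⟩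
    have := hanti ht h1 ht.2
    have hx1 : cliquePoly G V' ((1:ℝ) • x) = cliquePoly G V' x := by rw [one_smul]
    calc (0:ℝ) < cliquePoly G V' x := hxpos V'
    _ = cliquePoly G V' ((1:ℝ) • x) := hx1.symm
    _ ≤ cliquePoly G V' (t • x) := this

theorem regionR_starShaped' (G : SimpleGraph V) (x : V → ℝ)
    (hx01 : ∀ v, x v ∈ Set.Icc (0:ℝ) 1) (hxpos : ∀ V' : Finset V, 0 < cliquePoly G V' x)
    (α : ℝ) (hα : α ∈ Set.Icc (0 : ℝ) 1) :
    (∀ v, (α • x) v ∈ Set.Icc (0:ℝ) 1) ∧ ∀ V' : Finset V, 0 < cliquePoly G V' (α • x) := by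
  constructor
  · intro v
    exact ⟨mul_nonneg hα.1 (hx01 v).1, mul_le_one₀ hα.2 (hx01 v).1 (hx01 v).2⟩
  · exact fun V' => cliquePoly_smul_pos G x hx01 hxpos V' α hα

/-- `R(G)` is star-shaped about the origin. -/
theorem regionR_starShaped (G : SimpleGraph V) (x : V → ℝ) (hx : x ∈ regionR G)
    (α : ℝ) (hα : α ∈ Set.Icc (0 : ℝ) 1) :
    α • x ∈ regionR G := by
  obtain ⟨hx01, hxpos⟩ := hx
  exact regionR_starShaped' G x hx01 hxpos α hα
end
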